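/- arXiv:2511.02883 — 4 statements merged into one kernel-verified Lean document; each statement's English description precedes it below -/
import Mathlib

section
/- Let m be a non-negative integer and let q be an integer partition of m. Then for every real number x, the sum over all integer partitions p of m of (x^{\underline{|[p]|}} / [p]!) · N(p,q) equals x^{\underline{q}} / q!, i.e. ∑_{p ⊢ m} (x^{\underline{|[p]|}} / [p]!) N(p,q) = ∏_{i} x^{\underline{q_i}} / q_i!. -/
open Finset

/-- Falling factorial of a real number: `x (x-1) ⋯ (x-n+1)`. -/
def fallFac (x : ℝ) (n : ℕ) : ℝ := ∏ i ∈ Finset.range n, (x - i)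

/-- `[p]!`: the product of the factorials of the multiplicities of the parts of `p`. -/
def multFact {m : ℕ} (p : Nat.Partition m) : ℕ :=
  ∏ i ∈ p.parts.toFinset, Nat.factorial (p.parts.count i)

/-- The parts of a partition, as a list, sorted in decreasing order. -/
def partsList {m : ℕ} (p : Nat.Partition m) : List ℕ := p.parts.sort (· ≥ ·)

/-- `N(p,q)`: the number of `|[p]| × |[q]|` binary matrices whose row sums are given
by `p` and whose column sums are given by `q`. -/
noncomputable def Nmat {m : ℕ} (p q : Nat.Partition m) : ℕ :=
  Nat.card {M : Matrix (Fin (Multiset.card p.parts)) (Fin (Multiset.card q.parts)) Bool //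
    (∀ i, (∑ j, if M i j then 1 else 0) = (partsList p).getD i 0) ∧
    (∀ j, (∑ i, if M i j then 1 else 0) = (partsList q).getD j 0)}

section PermCount

variable {α β : Type*} [Fintype α] [DecidableEq α] [DecidableEq β]

/-- Restriction of a fiber-preserving permutation to a fiber. -/
def permRestrict (g : α → β) (τ : {τ : Equiv.Perm α // ∀ a, g (τ a) = g a}) (b : β) :
    Equiv.Perm {a // g a = b} where
  toFun x := ⟨τ.1 x.1, (τ.2 x.1).trans x.2⟩
  invFun x := ⟨τ.1.symm x.1, by
    have := τ.2 (τ.1.symm x.1); rw [Equiv.apply_symm_apply] at this; exact this.symm.trans x.2⟩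
  left_inv x := Subtype.ext (τ.1.symm_apply_apply x.1)
  right_inv x := Subtype.ext (τ.1.apply_symm_apply x.1)

theorem permRestrict_bijective (g : α → β) :
    Function.Bijective (permRestrict g) := by
  constructor
  · intro τ₁ τ₂ h
    ext a
    have := congrFun h (g a)
    have := congrArg (fun e => (e ⟨a, rfl⟩ : {x // g x = g a}).1) this
    exact this
  · intro σs
    have key : ∀ a, g ((Equiv.ofFiberEquiv (fun b => (σs b))) a) = g a :=
      fun a => Equiv.ofFiberEquiv_map _ a
    refine ⟨⟨Equiv.ofFiberEquiv (fun b => (σs b)), key⟩, ?_⟩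
    funext b
    ext ⟨a, ha⟩
    show ((Equiv.ofFiberEquiv (fun b => (σs b))) a : α) = _
    subst ha
    rfl

theorem card_perm_stab [Fintype β] (g : α → β) :
    Fintype.card {τ : Equiv.Perm α // ∀ a, g (τ a) = g a}
      = ∏ b : β, (Fintype.card {a // g a = b}).factorial := by
  rw [Fintype.card_of_bijective (permRestrict_bijective g)]
  rw [Fintype.card_pi]
  exact Finset.prod_congr rfl fun b _ => Fintype.card_perm

end PermCount

section PermCount2

variable {α β : Type*} [Fintype α] [DecidableEq α] [DecidableEq β]

theorem card_fiber_eq_count (f : α → β) (b : β) :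
    Fintype.card {a // f a = b} = Multiset.count b (Multiset.map f Finset.univ.val) := by
  rw [Fintype.card_subtype, Multiset.count_map]
  rw [Finset.card_filter]
  simp [Finset.sum_boole, eq_comm]
  rfl

theorem card_perm_coset (f g : α → β)
    (h : Multiset.map f Finset.univ.val = Multiset.map g Finset.univ.val) :
    Nat.card {τ : Equiv.Perm α // ∀ a, f (τ a) = g a}
      = Nat.card {τ : Equiv.Perm α // ∀ a, g (τ a) = g a} := by
  have hfib : ∀ b, Fintype.card {a // g a = b} = Fintype.card {a // f a = b} := by
    intro b; rw [card_fiber_eq_count, card_fiber_eq_count, h]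
  set τ₀ : α ≃ α := Equiv.ofFiberEquiv (f := g) (g := f)
    (fun b => Fintype.equivOfCardEq (hfib b)) with hτ₀def
  have hτ₀ : ∀ a, f (τ₀ a) = g a := fun a => Equiv.ofFiberEquiv_map _ a
  apply Nat.card_congr
  refine ⟨fun τ => ⟨τ.1.trans τ₀.symm, fun a => ?_⟩,
          fun υ => ⟨υ.1.trans τ₀, fun a => ?_⟩, fun τ => ?_, fun υ => ?_⟩
  · show g (τ₀.symm (τ.1 a)) = g a
    have : f (τ₀ (τ₀.symm (τ.1 a))) = g (τ₀.symm (τ.1 a)) := hτ₀ _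
    rw [Equiv.apply_symm_apply] at this
    rw [← this, τ.2 a]
  · show f (τ₀ (υ.1 a)) = g a
    rw [hτ₀, υ.2 a]
  · apply Subtype.ext; ext a; simp
  · apply Subtype.ext; ext a; simp

theorem card_perm_stab' (g : α → β) :
    Nat.card {τ : Equiv.Perm α // ∀ a, g (τ a) = g a}
      = ∏ b ∈ Finset.image g Finset.univ, (Fintype.card {a // g a = b}).factorial := by
  classical
  set s : Finset β := Finset.image g Finset.univ with hs
  have hmem : ∀ a, g a ∈ s := fun a => Finset.mem_image_of_mem g (Finset.mem_univ a)
  set g' : α → ↑s := fun a => ⟨g a, hmem a⟩ with hg'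
  have e1 : {τ : Equiv.Perm α // ∀ a, g (τ a) = g a}
      ≃ {τ : Equiv.Perm α // ∀ a, g' (τ a) = g' a} :=
    Equiv.subtypeEquiv (Equiv.refl _) (by
      intro τ
      simp only [Equiv.refl_apply]
      constructor
      · intro h a; exact Subtype.ext (h a)
      · intro h a; exact congrArg Subtype.val (h a))
  rw [Nat.card_congr e1, Nat.card_eq_fintype_card, card_perm_stab g']
  rw [← Finset.prod_coe_sort s]
  refine Finset.prod_congr rfl ?_
  intro b _
  congr 1
  apply Fintype.card_congr
  exact Equiv.subtypeEquiv (Equiv.refl _) (by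
    intro a; simp only [Equiv.refl_apply]
    exact ⟨fun h => congrArg Subtype.val h, fun h => Subtype.ext h⟩)

theorem card_perm_rearrange (f g : α → β)
    (h : Multiset.map f Finset.univ.val = Multiset.map g Finset.univ.val) :
    Nat.card {τ : Equiv.Perm α // ∀ a, f (τ a) = g a}
      = ∏ b ∈ Finset.image g Finset.univ, (Fintype.card {a // g a = b}).factorial := by
  rw [card_perm_coset f g h, card_perm_stab']

end PermCount2

section Lists

theorem getD_map_univ {γ : Type*} (l : List γ) (d : γ) {n : ℕ} (h : l.length = n) :
    Multiset.map (fun i : Fin n => l.getD i d) Finset.univ.val = ↑l := by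
  subst h
  rw [Fin.univ_val_map]
  congr 1
  conv_rhs => rw [← List.ofFn_get l]
  have : (fun i : Fin l.length => l.getD i d) = l.get := by
    funext i
    rw [List.getD_eq_getElem l d i.isLt]
    rfl
  rw [this, List.ofFn_get]

end Lists

section Parts

variable {m : ℕ} (p : Nat.Partition m)

/-- The sorted row-sums function of a partition. -/
def rsF : Fin (Multiset.card p.parts) → ℕ := fun i => (partsList p).getD i 0

theorem map_rsF : Multiset.map (rsF p) Finset.univ.val = p.parts := by
  rw [show rsF p = fun i : Fin (Multiset.card p.parts) => (partsList p).getD i 0 from rfl]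
  rw [getD_map_univ (partsList p) 0 (Multiset.length_sort _)]
  exact Multiset.sort_eq _ _

theorem sum_rsF : ∑ i, rsF p i = m := by
  have : (Multiset.map (rsF p) Finset.univ.val).sum = p.parts.sum := by rw [map_rsF]
  rw [p.parts_sum] at this
  exact this

theorem rsF_pos (i : Fin (Multiset.card p.parts)) : 0 < rsF p i := by
  apply p.parts_pos
  rw [← map_rsF p]
  exact Multiset.mem_map_of_mem _ (Finset.mem_univ_val i)

theorem multFact_eq : multFact p
    = ∏ b ∈ Finset.image (rsF p) Finset.univ, (Fintype.card {i // rsF p i = b}).factorial := by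
  have himg : Finset.image (rsF p) Finset.univ = p.parts.toFinset := by
    ext b
    simp only [Finset.mem_image, Multiset.mem_toFinset, ← map_rsF p, Multiset.mem_map]
    constructor
    · rintro ⟨i, -, hi⟩; exact ⟨i, Finset.mem_univ_val i, hi⟩
    · rintro ⟨i, -, hi⟩; exact ⟨i, Finset.mem_univ i, hi⟩
  rw [himg, multFact]
  refine Finset.prod_congr rfl fun b _ => ?_
  congr 1
  rw [card_fiber_eq_count, map_rsF]

end Parts

section Mats

variable {m : ℕ}

def rsum {a b : ℕ} (M : Fin a → Fin b → Bool) (i : Fin a) : ℕ := ∑ j, if M i j then 1 else 0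
def csum {a b : ℕ} (M : Fin a → Fin b → Bool) (j : Fin b) : ℕ := ∑ i, if M i j then 1 else 0

/-- Matrices counted by `Nmat`. -/
def PM (p q : Nat.Partition m) : Type :=
  {M : Fin (Multiset.card p.parts) → Fin (Multiset.card q.parts) → Bool //
    (∀ i, rsum M i = rsF p i) ∧ (∀ j, csum M j = rsF q j)}

instance (p q : Nat.Partition m) : Fintype (PM p q) := by unfold PM; infer_instance

theorem Nmat_eq (p q : Nat.Partition m) : Nmat p q = Fintype.card (PM p q) := by
  rw [show Nmat p q = Nat.card (PM p q) from rfl, Nat.card_eq_fintype_card]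

/-- Matrices with column sums `q` and row sums forming the partition `p` in any order. -/
def CS (p q : Nat.Partition m) : Type :=
  {P : Fin (Multiset.card p.parts) → Fin (Multiset.card q.parts) → Bool //
    (∀ j, csum P j = rsF q j) ∧ Multiset.map (rsum P) Finset.univ.val = p.parts}

instance (p q : Nat.Partition m) : Fintype (CS p q) := by unfold CS; infer_instance

set_option maxHeartbeats 2000000 in
theorem step4 (p q : Nat.Partition m) :
    Fintype.card (CS p q) * multFact p
      = (Multiset.card p.parts).factorial * Nmat p q := by
  classical
  -- classifying map
  let φ : Equiv.Perm (Fin (Multiset.card p.parts)) × PM p q → CS p q := fun x =>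
    ⟨fun i j => x.2.1 (x.1 i) j, by
      constructor
      · intro j
        show (∑ i, if x.2.1 (x.1 i) j then 1 else 0) = rsF q j
        rw [Fintype.sum_equiv x.1 _ (fun i => if x.2.1 i j then 1 else 0) (fun i => rfl)]
        exact x.2.2.2 j
      · have hr : ∀ i, rsum (fun i j => x.2.1 (x.1 i) j) i = rsF p (x.1 i) := by
          intro i
          show rsum x.2.1 (x.1 i) = _
          exact x.2.2.1 (x.1 i)
        calc Multiset.map (rsum fun i j => x.2.1 (x.1 i) j) Finset.univ.val
            = Multiset.map (fun i => rsF p (x.1 i)) Finset.univ.val :=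
              Multiset.map_congr rfl (fun i _ => hr i)
          _ = Multiset.map (rsF p) (Multiset.map x.1 Finset.univ.val) := by
              rw [Multiset.map_map]; rfl
          _ = p.parts := by rw [Multiset.map_univ_val_equiv x.1, map_rsF]⟩
  have hcard : Fintype.card (Equiv.Perm (Fin (Multiset.card p.parts)) × PM p q)
      = ∑ M : CS p q, Nat.card {x // φ x = M} := by
    rw [Finset.sum_congr rfl (fun M _ => (Nat.card_eq_fintype_card
      (α := {x // φ x = M})))]
    rw [← Fintype.card_sigma]
    exact Fintype.card_congr (Equiv.sigmaFiberEquiv φ).symm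
  have hfib : ∀ M : CS p q,
      Nat.card {x // φ x = M} = multFact p := by
    intro M
    have e : {x // φ x = M} ≃ {τ : Equiv.Perm (Fin (Multiset.card p.parts)) // ∀ i, rsum M.1 (τ i) = rsF p i} := by
      refine ⟨fun x => ⟨x.1.1⁻¹, ?_⟩, fun τ => ⟨⟨τ.1⁻¹, ⟨fun i j => M.1 (τ.1 i) j, ?_, ?_⟩⟩, ?_⟩,
        ?_, ?_⟩
      · intro i
        have hM : (fun i j => x.1.2.1 (x.1.1 i) j) = M.1 := congrArg Subtype.val x.2
        rw [← hM]
        show rsum x.1.2.1 (x.1.1 (x.1.1⁻¹ i)) = _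
        rw [← Equiv.Perm.mul_apply, mul_inv_cancel, Equiv.Perm.one_apply]
        exact x.1.2.2.1 i
      · intro i
        show rsum M.1 (τ.1 i) = _
        exact τ.2 i
      · intro j
        show (∑ i, if M.1 (τ.1 i) j then 1 else 0) = rsF q j
        rw [Fintype.sum_equiv τ.1 _ (fun i => if M.1 i j then 1 else 0) (fun i => rfl)]
        exact M.2.1 j
      · apply Subtype.ext
        apply funext; intro i; apply funext; intro j
        show M.1 (τ.1 (τ.1⁻¹ i)) j = M.1 i j
        rw [← Equiv.Perm.mul_apply, mul_inv_cancel, Equiv.Perm.one_apply]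
      · rintro ⟨⟨σ, P⟩, hx⟩
        have hM : (fun i j => P.1 (σ i) j) = M.1 := congrArg Subtype.val hx
        apply Subtype.ext
        apply Prod.ext
        · simp
        · apply Subtype.ext
          show (fun i j => M.1 (σ⁻¹ i) j) = P.1
          rw [← hM]
          funext i j
          simp
      · intro τ
        apply Subtype.ext
        simp
    refine (Nat.card_congr e).trans ?_
    have hmul : Multiset.map (rsum M.1) Finset.univ.val
        = Multiset.map (rsF p) Finset.univ.val := by
      rw [map_rsF, M.2.2]
    exact (card_perm_rearrange (rsum M.1) (rsF p) hmul).trans (multFact_eq p).symm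
  rw [Finset.sum_congr rfl (fun M _ => hfib M)] at hcard
  rw [Finset.sum_const, Finset.card_univ, smul_eq_mul] at hcard
  rw [Fintype.card_prod, Fintype.card_perm, Fintype.card_fin, ← Nmat_eq] at hcard
  exact hcard.symm.trans rfl

end Mats

section Steps12

variable {m : ℕ}

theorem row_eq_false {a b : ℕ} {M : Fin a → Fin b → Bool} {i : Fin a}
    (h : rsum M i = 0) (j : Fin b) : M i j = false := by
  rw [rsum, Finset.sum_eq_zero_iff] at h
  have := h j (Finset.mem_univ j)
  cases hb : M i j
  · rfl
  · rw [hb] at this; simp at this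

theorem card_bool_vec (n c : ℕ) :
    Fintype.card {v : Fin n → Bool // (∑ i, if v i then 1 else 0) = c} = n.choose c := by
  have e : {v : Fin n → Bool // (∑ i, if v i then 1 else 0) = c}
      ≃ {s : Finset (Fin n) // s.card = c} := by
    refine ⟨fun v => ⟨Finset.univ.filter (fun i => v.1 i = true), ?_⟩,
      fun s => ⟨fun i => decide (i ∈ s.1), ?_⟩, fun v => ?_, fun s => ?_⟩
    · refine Eq.trans ?_ v.2
      rw [Finset.card_filter]
    · refine Eq.trans ?_ s.2
      rw [Finset.sum_boole]
      norm_cast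
      congr 1
      ext i
      simp
    · apply Subtype.ext
      funext i
      by_cases h : v.1 i = true <;> simp [h]
    · apply Subtype.ext
      ext i
      simp
  rw [Fintype.card_congr e, Fintype.card_finset_len, Fintype.card_fin]

/-- Matrices with prescribed column sums. -/
def Mats (n : ℕ) (q : Nat.Partition m) : Type :=
  {M : Fin n → Fin (Multiset.card q.parts) → Bool // ∀ j, csum M j = rsF q j}

instance (n : ℕ) (q : Nat.Partition m) : Fintype (Mats n q) := by unfold Mats; infer_instance

theorem step1 (n : ℕ) (q : Nat.Partition m) :
    Fintype.card (Mats n q) = ∏ j, n.choose (rsF q j) := by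
  have e : Mats n q ≃ ∀ j : Fin (Multiset.card q.parts),
      {v : Fin n → Bool // (∑ i, if v i then 1 else 0) = rsF q j} :=
    ⟨fun M => fun j => ⟨fun i => M.1 i j, M.2 j⟩,
     fun F => ⟨fun i j => (F j).1 i, fun j => (F j).2⟩,
     fun M => rfl, fun F => rfl⟩
  rw [Fintype.card_congr e, Fintype.card_pi]
  exact Finset.prod_congr rfl fun j _ => card_bool_vec n (rsF q j)

/-- Matrices with prescribed column sums and row partition. -/
def Fib (n : ℕ) (p q : Nat.Partition m) : Type :=
  {M : Fin n → Fin (Multiset.card q.parts) → Bool //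
    (∀ j, csum M j = rsF q j) ∧
    Multiset.filter (· ≠ 0) (Multiset.map (rsum M) Finset.univ.val) = p.parts}

instance (n : ℕ) (p q : Nat.Partition m) : Fintype (Fib n p q) := by unfold Fib; infer_instance

/-- The row partition of a matrix with column sums `q`. -/
def rowPart {n : ℕ} (q : Nat.Partition m) (M : Mats n q) : Nat.Partition m where
  parts := Multiset.filter (· ≠ 0) (Multiset.map (rsum M.1) Finset.univ.val)
  parts_pos := by
    intro a ha
    rw [Multiset.mem_filter] at ha
    exact Nat.pos_of_ne_zero ha.2
  parts_sum := by
    have h1 : (Multiset.map (rsum M.1) Finset.univ.val).sum = m := by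
      have : (Multiset.map (rsum M.1) Finset.univ.val).sum = ∑ i, rsum M.1 i := rfl
      rw [this]
      calc ∑ i, rsum M.1 i = ∑ i, ∑ j, if M.1 i j then 1 else 0 := rfl
        _ = ∑ j, ∑ i, if M.1 i j then 1 else 0 := Finset.sum_comm
        _ = ∑ j, rsF q j := Finset.sum_congr rfl fun j _ => M.2 j
        _ = m := sum_rsF q
    conv_rhs => rw [← h1]
    conv_rhs => rw [← Multiset.filter_add_not (· ≠ 0) (Multiset.map (rsum M.1) Finset.univ.val)]
    rw [Multiset.sum_add]
    have h0 : (Multiset.filter (fun a => ¬ a ≠ 0) (Multiset.map (rsum M.1) Finset.univ.val)).sum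
        = 0 := by
      apply Multiset.sum_eq_zero
      intro a ha
      rw [Multiset.mem_filter] at ha
      exact not_not.mp ha.2
    rw [h0, add_zero]

theorem step2 (n : ℕ) (q : Nat.Partition m) :
    Fintype.card (Mats n q) = ∑ p : Nat.Partition m, Nat.card (Fib n p q) := by
  have hfib : ∀ p : Nat.Partition m,
      Nat.card {x : Mats n q // rowPart q x = p} = Nat.card (Fib n p q) := by
    intro p
    apply Nat.card_congr
    refine ⟨fun x => ⟨x.1.1, x.1.2, congrArg Nat.Partition.parts x.2⟩,
      fun M => ⟨⟨M.1, M.2.1⟩, Nat.Partition.ext M.2.2⟩, fun x => ?_, fun M => rfl⟩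
    · apply Subtype.ext; rfl
  rw [Finset.sum_congr rfl (fun p _ => (hfib p).symm)]
  rw [Finset.sum_congr rfl (fun p _ => (Nat.card_eq_fintype_card
    (α := {x : Mats n q // rowPart q x = p})))]
  rw [← Fintype.card_sigma]
  exact Fintype.card_congr (Equiv.sigmaFiberEquiv (rowPart q)).symm

end Steps12

section Step3

variable {m : ℕ}

set_option maxHeartbeats 2000000 in
theorem step3 (n : ℕ) (p q : Nat.Partition m) :
    Nat.card (Fib n p q) = n.choose (Multiset.card p.parts) * Fintype.card (CS p q) := by
  classical
  have key : Fib n p q ≃ {s : Finset (Fin n) // s.card = Multiset.card p.parts} × CS p q := by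
    refine ⟨?_, ?_, ?_, ?_⟩
    · -- forward
      intro M
      set s := Finset.univ.filter (fun i => rsum M.1 i ≠ 0) with hsdef
      have hsval : s.val = Multiset.filter (fun i => rsum M.1 i ≠ 0) Finset.univ.val := rfl
      have hflt : Multiset.filter (· ≠ 0) (Multiset.map (rsum M.1) Finset.univ.val)
          = Multiset.map (rsum M.1) s.val := by
        rw [hsval, Multiset.filter_map]
        rfl
      have hcards : s.card = Multiset.card p.parts := by
        have := congrArg Multiset.card (hflt.symm.trans M.2.2)
        rwa [Multiset.card_map] at this
      let e := s.orderIsoOfFin hcards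
      refine ⟨⟨s, hcards⟩, ⟨fun a j => M.1 (e a) j, ?_, ?_⟩⟩
      · intro j
        show (∑ a, if M.1 (e a) j then 1 else 0) = rsF q j
        rw [← M.2.1 j, csum]
        calc (∑ a, if M.1 (e a) j then 1 else 0)
            = ∑ x : {i // i ∈ s}, (if M.1 x.1 j then 1 else 0) :=
              (Equiv.sum_comp e.toEquiv (fun x => if M.1 x.1 j then 1 else 0))
          _ = ∑ i ∈ s, (if M.1 i j then 1 else 0) :=
              Finset.sum_coe_sort s (fun i => if M.1 i j then 1 else 0)
          _ = ∑ i, (if M.1 i j then 1 else 0) := by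
              refine Finset.sum_subset (Finset.subset_univ s) ?_
              intro i _ hi
              rw [hsdef, Finset.mem_filter, not_and, not_not] at hi
              rw [row_eq_false (hi (Finset.mem_univ i)) j]
              rfl
      · show Multiset.map (rsum (fun a j => M.1 (e a) j)) Finset.univ.val = p.parts
        have h2 : Multiset.map (fun a => ((e a : Fin n))) Finset.univ.val = s.val := by
          have h3 : Multiset.map (fun x : {i // i ∈ s} => (x : Fin n))
              (Finset.univ.val) = s.val := by
            rw [Finset.univ_eq_attach, Finset.attach_val]
            exact Multiset.attach_map_val s.val
          rw [← h3, ← Multiset.map_univ_val_equiv e.toEquiv, Multiset.map_map]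
          rfl
        calc Multiset.map (rsum (fun a j => M.1 (e a) j)) Finset.univ.val
            = Multiset.map (rsum M.1) (Multiset.map (fun a => ((e a : Fin n)))
                Finset.univ.val) := by rw [Multiset.map_map]; rfl
          _ = Multiset.map (rsum M.1) s.val := by rw [h2]
          _ = p.parts := hflt.symm.trans M.2.2
    · -- backward
      rintro ⟨⟨s, hs⟩, P⟩
      let e := s.orderIsoOfFin hs
      set M : Fin n → Fin (Multiset.card q.parts) → Bool :=
        fun i j => if h : i ∈ s then P.1 (e.symm ⟨i, h⟩) j else false with hMdef
      have hrs : ∀ i (h : i ∈ s), rsum M i = rsum P.1 (e.symm ⟨i, h⟩) := by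
        intro i h
        apply Finset.sum_congr rfl
        intro j _
        rw [hMdef]
        simp only [dif_pos h]
      have hrs0 : ∀ i, i ∉ s → rsum M i = 0 := by
        intro i h
        apply Finset.sum_eq_zero
        intro j _
        rw [hMdef]
        simp only [dif_neg h]
        simp
      have hPpos : ∀ a, rsum P.1 a ≠ 0 := by
        intro a
        have hmem := Multiset.mem_map_of_mem (rsum P.1) (Finset.mem_univ_val a)
        rw [P.2.2] at hmem
        exact (p.parts_pos hmem).ne'
      refine ⟨M, ?_, ?_⟩
      · intro j
        show (∑ i, if M i j then 1 else 0) = rsF q j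
        refine Eq.trans ?_ (P.2.1 j)
        calc (∑ i, if M i j then 1 else 0)
            = ∑ i ∈ s, (if M i j then 1 else 0) := by
              refine (Finset.sum_subset (Finset.subset_univ s) ?_).symm
              intro i _ hi
              rw [hMdef]
              simp only [dif_neg hi]
              simp
          _ = ∑ x : {i // i ∈ s}, (if M x.1 j then 1 else 0) := (Finset.sum_coe_sort s _).symm
          _ = ∑ x : {i // i ∈ s}, (if P.1 (e.symm x) j then 1 else 0) := by
              refine Finset.sum_congr rfl fun x _ => ?_
              rw [hMdef]
              simp only [dif_pos x.2]
          _ = ∑ a, (if P.1 a j then 1 else 0) :=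
              Equiv.sum_comp e.toEquiv.symm (fun a => if P.1 a j then 1 else 0)
          _ = csum P.1 j := rfl
      · have hiff : ∀ i, rsum M i ≠ 0 ↔ i ∈ s := by
          intro i
          constructor
          · intro h
            by_contra hi
            exact h (hrs0 i hi)
          · intro h
            rw [hrs i h]
            exact hPpos _
        have hsfin : Finset.univ.filter (fun i => rsum M i ≠ 0) = s := by
          ext i
          simp [hiff i]
        have hsval2 : s.val = Multiset.filter (fun i => rsum M i ≠ 0) Finset.univ.val :=
          (congrArg Finset.val hsfin).symm
        have h3 : Multiset.map (fun x : {i // i ∈ s} => (x : Fin n))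
            (Finset.univ.val) = s.val := by
          rw [Finset.univ_eq_attach, Finset.attach_val]
          exact Multiset.attach_map_val s.val
        calc Multiset.filter (· ≠ 0) (Multiset.map (rsum M) Finset.univ.val)
            = Multiset.map (rsum M) s.val := by
              rw [hsval2, Multiset.filter_map]
              rfl
          _ = Multiset.map (fun x : {i // i ∈ s} => rsum M x.1) Finset.univ.val := by
              rw [← h3, Multiset.map_map]; rfl
          _ = Multiset.map (fun x : {i // i ∈ s} => rsum P.1 (e.symm x)) Finset.univ.val :=
              Multiset.map_congr rfl (fun x _ => hrs x.1 x.2)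
          _ = Multiset.map (fun a => rsum P.1 (e.symm (e.toEquiv a))) Finset.univ.val := by
              rw [← Multiset.map_univ_val_equiv e.toEquiv, Multiset.map_map]
              rfl
          _ = Multiset.map (rsum P.1) Finset.univ.val :=
              Multiset.map_congr rfl (fun a _ => by
                show rsum P.1 (e.symm (e a)) = rsum P.1 a
                rw [OrderIso.symm_apply_apply])
          _ = p.parts := P.2.2
    · -- left inverse
      intro M
      apply Subtype.ext
      funext i j
      show (if h : i ∈ Finset.univ.filter (fun i => rsum M.1 i ≠ 0) then _ else false) = M.1 i j
      by_cases h : i ∈ Finset.univ.filter (fun i => rsum M.1 i ≠ 0)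
      · rw [dif_pos h]
        show M.1 (((Finset.univ.filter (fun i => rsum M.1 i ≠ 0)).orderIsoOfFin _)
          (((Finset.univ.filter (fun i => rsum M.1 i ≠ 0)).orderIsoOfFin _).symm ⟨i, h⟩)) j
            = M.1 i j
        rw [OrderIso.apply_symm_apply]
      · rw [dif_neg h]
        rw [Finset.mem_filter, not_and, not_not] at h
        exact (row_eq_false (h (Finset.mem_univ i)) j).symm
    · -- right inverse
      rintro ⟨⟨s, hs⟩, P⟩
      set e := s.orderIsoOfFin hs with hedef
      set M : Fin n → Fin (Multiset.card q.parts) → Bool :=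
        fun i j => if h : i ∈ s then P.1 (e.symm ⟨i, h⟩) j else false with hMdef
      have hrs : ∀ i (h : i ∈ s), rsum M i = rsum P.1 (e.symm ⟨i, h⟩) := by
        intro i h
        apply Finset.sum_congr rfl
        intro j _
        rw [hMdef]
        simp only [dif_pos h]
      have hrs0 : ∀ i, i ∉ s → rsum M i = 0 := by
        intro i h
        apply Finset.sum_eq_zero
        intro j _
        rw [hMdef]
        simp only [dif_neg h]
        simp
      have hPpos : ∀ a, rsum P.1 a ≠ 0 := by
        intro a
        have hmem := Multiset.mem_map_of_mem (rsum P.1) (Finset.mem_univ_val a)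
        rw [P.2.2] at hmem
        exact (p.parts_pos hmem).ne'
      have hsfin : Finset.univ.filter (fun i => rsum M i ≠ 0) = s := by
        ext i
        simp only [Finset.mem_filter, Finset.mem_univ, true_and]
        constructor
        · intro h
          by_contra hi
          exact h (hrs0 i hi)
        · intro h
          rw [hrs i h]
          exact hPpos _
      have h' : (Finset.univ.filter (fun i => rsum M i ≠ 0)).card = Multiset.card p.parts := by
        rw [hsfin]; exact hs
      apply Prod.ext
      · apply Subtype.ext
        show Finset.univ.filter (fun i => rsum M i ≠ 0) = s
        exact hsfin
      · apply Subtype.ext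
        show (fun a j => M (((Finset.univ.filter (fun i => rsum M i ≠ 0)).orderIsoOfFin h' a
          : Fin n)) j) = P.1
        funext a j
        have hco : (((Finset.univ.filter (fun i => rsum M i ≠ 0)).orderIsoOfFin h' a : Fin n))
            = (e a : Fin n) := by
          have hgen : ∀ (t : Finset (Fin n)) (ht : t = s)
              (h'' : t.card = Multiset.card p.parts),
              ((t.orderIsoOfFin h'' a : Fin n)) = (s.orderIsoOfFin hs a : Fin n) := by
            intro t ht h''
            subst ht
            rfl
          exact hgen _ hsfin h'
        rw [hco]
        show (if h : (e a : Fin n) ∈ s then P.1 (e.symm ⟨(e a : Fin n), h⟩) j else false)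
          = P.1 a j
        rw [dif_pos (e a).2]
        have : (⟨(e a : Fin n), (e a).2⟩ : {i // i ∈ s}) = e a := Subtype.ext rfl
        rw [this]
        rw [OrderIso.symm_apply_apply]
  rw [Nat.card_congr key, Nat.card_eq_fintype_card, Fintype.card_prod,
    Fintype.card_finset_len, Fintype.card_fin]

end Step3

section Final

variable {m : ℕ}

theorem fallFac_natCast (n a : ℕ) : fallFac (n : ℝ) a = (n.descFactorial a : ℝ) := by
  induction a with
  | zero => simp [fallFac]
  | succ k ih =>
    rw [fallFac, Finset.prod_range_succ, ← fallFac, ih, Nat.descFactorial_succ]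
    by_cases h : k ≤ n
    · push_cast [Nat.cast_sub h]
      ring
    · rw [Nat.descFactorial_eq_zero_iff_lt.mpr (Nat.lt_of_not_le h)]
      simp

theorem multFact_ne_zero (p : Nat.Partition m) : (multFact p : ℝ) ≠ 0 := by
  rw [Nat.cast_ne_zero, multFact]
  exact Finset.prod_ne_zero_iff.mpr (fun i _ => Nat.factorial_ne_zero _)

theorem eval_id (q : Nat.Partition m) (n : ℕ) :
    (∑ p : Nat.Partition m,
      fallFac (n : ℝ) (Multiset.card p.parts) / multFact p * Nmat p q)
    = ∏ j, fallFac (n : ℝ) (rsF q j) / (rsF q j).factorial := by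
  classical
  have hterm : ∀ p : Nat.Partition m,
      fallFac (n : ℝ) (Multiset.card p.parts) / multFact p * Nmat p q
        = (Nat.card (Fib n p q) : ℝ) := by
    intro p
    have h4 := step4 p q
    have h4' : ((Fintype.card (CS p q) : ℝ)) * multFact p
        = ((Multiset.card p.parts).factorial : ℝ) * Nmat p q := by
      exact_mod_cast congrArg (Nat.cast (R := ℝ)) h4
    rw [fallFac_natCast, step3 n p q]
    rw [div_mul_eq_mul_div, div_eq_iff (multFact_ne_zero p)]
    push_cast [Nat.descFactorial_eq_factorial_mul_choose]
    linear_combination (-(n.choose (Multiset.card p.parts) : ℝ)) * h4'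
  rw [Finset.sum_congr rfl (fun p _ => hterm p)]
  have h2 : (∑ p : Nat.Partition m, (Nat.card (Fib n p q) : ℝ))
      = (Fintype.card (Mats n q) : ℝ) := by
    rw [← Nat.cast_sum]
    exact_mod_cast congrArg (Nat.cast (R := ℝ)) (step2 n q).symm
  rw [h2, step1 n q]
  push_cast
  refine Finset.prod_congr rfl fun j _ => ?_
  rw [fallFac_natCast, Nat.descFactorial_eq_factorial_mul_choose]
  have hf : ((rsF q j).factorial : ℝ) ≠ 0 := Nat.cast_ne_zero.mpr (Nat.factorial_ne_zero _)
  field_simp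
  push_cast
  ring

noncomputable def ffPoly (a : ℕ) : Polynomial ℝ :=
  ∏ i ∈ Finset.range a, (Polynomial.X - Polynomial.C (i : ℝ))

theorem ffPoly_eval (x : ℝ) (a : ℕ) : (ffPoly a).eval x = fallFac x a := by
  simp [ffPoly, fallFac, Polynomial.eval_prod]

theorem stmt0' (q : Nat.Partition m) (x : ℝ) :
    ∑ p : Nat.Partition m,
      fallFac x (Multiset.card p.parts) / multFact p * Nmat p q
    = (q.parts.map fun a => fallFac x a / Nat.factorial a).prod := by
  classical
  set P : Polynomial ℝ := ∑ p : Nat.Partition m,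
    Polynomial.C ((multFact p : ℝ)⁻¹ * (Nmat p q : ℝ)) * ffPoly (Multiset.card p.parts)
    with hP
  set Q : Polynomial ℝ := ∏ j : Fin (Multiset.card q.parts),
    (Polynomial.C (((rsF q j).factorial : ℝ))⁻¹ * ffPoly (rsF q j)) with hQ
  have hPev : ∀ y : ℝ, P.eval y
      = ∑ p : Nat.Partition m, fallFac y (Multiset.card p.parts) / multFact p * Nmat p q := by
    intro y
    rw [hP, Polynomial.eval_finset_sum]
    refine Finset.sum_congr rfl fun p _ => ?_
    rw [Polynomial.eval_mul, Polynomial.eval_C, ffPoly_eval]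
    field_simp
  have hQev : ∀ y : ℝ, Q.eval y
      = ∏ j, fallFac y (rsF q j) / (rsF q j).factorial := by
    intro y
    rw [hQ, Polynomial.eval_prod]
    refine Finset.prod_congr rfl fun j _ => ?_
    rw [Polynomial.eval_mul, Polynomial.eval_C, ffPoly_eval]
    field_simp
  have hPQ : P = Q := by
    apply Polynomial.eq_of_infinite_eval_eq
    apply Set.infinite_of_injective_forall_mem (f := fun n : ℕ => (n : ℝ))
    case hi => exact fun a b h => Nat.cast_injective h
    case hf =>
      intro n
      show P.eval (n : ℝ) = Q.eval (n : ℝ)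
      rw [hPev, hQev]
      exact eval_id q n
  have hRHS : (∏ j, fallFac x (rsF q j) / ((rsF q j).factorial : ℝ))
      = (q.parts.map fun a => fallFac x a / Nat.factorial a).prod := by
    conv_rhs => rw [← map_rsF q]
    rw [Multiset.map_map]
    rfl
  rw [← hRHS, ← hPev x, ← hQev x, hPQ]

end Final


theorem stmt0 (m : ℕ) (q : Nat.Partition m) (x : ℝ) :
    ∑ p : Nat.Partition m,
      fallFac x (Multiset.card p.parts) / multFact p * Nmat p q
    = (q.parts.map fun a => fallFac x a / Nat.factorial a).prod := by
  exact stmt0' q x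
end

section
/- Let m be a non-negative integer. Then for all real numbers x and y, ∑_{p,q ⊢ m} (x^{\underline{|[p]|}} / [p]!) · (y^{\underline{|[q]|}} / [q]!) · N(p,q) = (xy)^{\underline{m}} / m!, where the sum ranges over all pairs of integer partitions p, q of m. -/
open Finset

namespace Stmt1Aux

/-- multiset of nonzero values of a function -/
def prof {α : Type*} [Fintype α] (g : α → ℕ) : Multiset ℕ :=
  Multiset.filter (· ≠ 0) (Multiset.map g Finset.univ.val)

def rowS {a b : ℕ} (M : Matrix (Fin a) (Fin b) Bool) : Fin a → ℕ :=
  fun x => ∑ y, if M x y then 1 else 0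

def colS {a b : ℕ} (M : Matrix (Fin a) (Fin b) Bool) : Fin b → ℕ :=
  fun y => ∑ x, if M x y then 1 else 0

def Lp {m : ℕ} (p : Nat.Partition m) : Fin (Multiset.card p.parts) → ℕ :=
  fun i => (partsList p).getD i 0

lemma length_partsList {m : ℕ} (p : Nat.Partition m) :
    (partsList p).length = Multiset.card p.parts := Multiset.length_sort _

lemma ofFn_Lp {m : ℕ} (p : Nat.Partition m) : List.ofFn (Lp p) = partsList p := by
  apply List.ext_get
  · simp [length_partsList]
  intro i h1 h2
  simp only [List.get_ofFn, Lp]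
  rw [List.getD_eq_getElem _ _ (by simpa using h2)]
  simp

lemma multiset_Lp {m : ℕ} (p : Nat.Partition m) :
    Multiset.map (Lp p) Finset.univ.val = p.parts := by
  have h1 : (Finset.univ.val : Multiset (Fin (Multiset.card p.parts)))
      = ↑(List.finRange (Multiset.card p.parts)) := by
    rw [Fin.univ_def]
  rw [h1, Multiset.map_coe, ← List.ofFn_eq_map, ofFn_Lp, partsList, Multiset.sort_eq]

lemma Lp_mem {m : ℕ} (p : Nat.Partition m) (i : Fin (Multiset.card p.parts)) :
    Lp p i ∈ p.parts := by
  have h2 : (i : ℕ) < (partsList p).length := by rw [length_partsList]; exact i.2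
  have : Lp p i ∈ partsList p := by
    rw [Lp, List.getD_eq_getElem _ _ h2]
    exact List.getElem_mem _
  rwa [partsList, Multiset.mem_sort] at this

lemma Lp_pos {m : ℕ} (p : Nat.Partition m) (i : Fin (Multiset.card p.parts)) : 0 < Lp p i :=
  p.parts_pos (Lp_mem p i)

lemma count_prof {α : Type*} [Fintype α] [DecidableEq α] (g : α → ℕ) (v : ℕ) (hv : v ≠ 0) :
    (prof g).count v = (Finset.univ.filter fun x => g x = v).card := by
  rw [prof, Multiset.count_filter_of_pos (p := fun x => x ≠ 0) hv, Multiset.count_map]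
  rw [Finset.card_def, Finset.filter_val]
  exact congrArg _ (Multiset.filter_congr (fun x _ => by constructor <;> (intro h; omega)))

lemma sum_prof {α : Type*} [Fintype α] (g : α → ℕ) : (prof g).sum = ∑ x, g x := by
  have h2 : (Multiset.filter (fun v => ¬ v ≠ 0) (Multiset.map g Finset.univ.val)).sum = 0 :=
    Multiset.sum_eq_zero (fun x hx => by simpa using (Multiset.of_mem_filter hx))
  have h3 : (prof g).sum + (Multiset.filter (fun v => ¬ v ≠ 0)
      (Multiset.map g Finset.univ.val)).sum = (Multiset.map g Finset.univ.val).sum := by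
    rw [prof, ← Multiset.sum_add, Multiset.filter_add_not]
  rw [h2, add_zero] at h3
  rw [h3]
  rfl

lemma card_prof {α : Type*} [Fintype α] [DecidableEq α] (g : α → ℕ) :
    Multiset.card (prof g) = (Finset.univ.filter fun x => g x ≠ 0).card := by
  rw [prof, Multiset.filter_map, Multiset.card_map, Finset.card_def, Finset.filter_val]
  rfl

/-- The central counting lemma: the number of embeddings `f` of `Fin n` into `α`
such that `w (f i) = L i` for all `i`, where the profile of `w` equals the multiset `s`
of values of `L` (all nonzero), equals `∏ v ∈ s.toFinset, (s.count v)!`. -/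
lemma countOrd {α : Type*} [Fintype α] [DecidableEq α] {n : ℕ} (w : α → ℕ) (L : Fin n → ℕ)
    (s : Multiset ℕ) (hL0 : ∀ i, L i ≠ 0)
    (hLs : Multiset.map L Finset.univ.val = s)
    (hw : prof w = s) :
    Fintype.card {f : Fin n ↪ α // ∀ i, w (f i) = L i}
      = ∏ v ∈ s.toFinset, (s.count v).factorial := by
  classical
  have hmem : ∀ i : Fin n, L i ∈ s.toFinset := fun i => by
    rw [Multiset.mem_toFinset, ← hLs]
    exact Multiset.mem_map.2 ⟨i, Finset.mem_univ_val _, rfl⟩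
  have hcardA : ∀ v : ℕ, Fintype.card {i : Fin n // L i = v} = s.count v := by
    intro v
    rw [← hLs, Multiset.count_map, Fintype.card_subtype, Finset.card_def, Finset.filter_val]
    exact congrArg _ (Multiset.filter_congr (fun x _ => eq_comm))
  have hcardB : ∀ v : ℕ, v ≠ 0 → Fintype.card {x : α // w x = v} = s.count v := by
    intro v hv
    rw [← hw, count_prof w v hv, Fintype.card_subtype]
  have hv0 : ∀ v : ℕ, v ∈ s.toFinset → v ≠ 0 := by
    intro v hvs
    rw [Multiset.mem_toFinset, ← hLs] at hvs
    obtain ⟨i, -, rfl⟩ := Multiset.mem_map.1 hvs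
    exact hL0 i
  have hAB : ∀ v : ℕ, v ≠ 0 →
      Fintype.card {i : Fin n // L i = v} = Fintype.card {x : α // w x = v} := by
    intro v hv; rw [hcardA, hcardB v hv]
  have Econg : ∀ (Efam : ∀ v : s.toFinset, ({i : Fin n // L i = v.1} ≃ {x : α // w x = v.1}))
      (v v' : s.toFinset) (x : {k : Fin n // L k = v.1}) (x' : {k : Fin n // L k = v'.1}),
      v.1 = v'.1 → x.1 = x'.1 → (Efam v x).1 = (Efam v' x').1 := by
    intro Efam v v' x x' hv hx
    have hvv : v = v' := Subtype.ext hv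
    subst hvv
    have hxx : x = x' := Subtype.ext hx
    subst hxx
    rfl
  let fwd : {f : Fin n ↪ α // ∀ i, w (f i) = L i} →
      ∀ v : s.toFinset, ({i : Fin n // L i = v.1} ≃ {x : α // w x = v.1}) := fun f v =>
    Equiv.ofBijective (fun i => ⟨f.1 i.1, by rw [f.2]; exact i.2⟩)
      ((Fintype.bijective_iff_injective_and_card _).2
        ⟨fun i j hij => Subtype.ext (f.1.injective (congrArg Subtype.val hij)),
         hAB v.1 (hv0 v.1 v.2)⟩)
  let bwdf : (∀ v : s.toFinset, ({i : Fin n // L i = v.1} ≃ {x : α // w x = v.1})) →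
      Fin n → α := fun Efam i => (Efam ⟨L i, hmem i⟩ ⟨i, rfl⟩).1
  have bwdw : ∀ Efam i, w (bwdf Efam i) = L i := fun Efam i => (Efam ⟨L i, hmem i⟩ ⟨i, rfl⟩).2
  have bwdinj : ∀ Efam, Function.Injective (bwdf Efam) := by
    intro Efam i j hij
    have hL : L j = L i := by rw [← bwdw Efam i, ← bwdw Efam j, hij]
    have h2 : (Efam ⟨L j, hmem j⟩ ⟨j, rfl⟩).1 = (Efam ⟨L i, hmem i⟩ ⟨j, hL⟩).1 :=
      Econg Efam _ _ _ _ hL rfl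
    have h3 : (Efam ⟨L i, hmem i⟩ ⟨i, rfl⟩).1 = (Efam ⟨L i, hmem i⟩ ⟨j, hL⟩).1 := by
      rw [← h2]; exact hij
    have h4 := (Efam ⟨L i, hmem i⟩).injective (Subtype.ext h3)
    exact congrArg Subtype.val h4
  let E : {f : Fin n ↪ α // ∀ i, w (f i) = L i}
      ≃ ∀ v : s.toFinset, ({i : Fin n // L i = v.1} ≃ {x : α // w x = v.1}) :=
    { toFun := fwd
      invFun := fun Efam => ⟨⟨bwdf Efam, bwdinj Efam⟩, bwdw Efam⟩
      left_inv := fun f => Subtype.ext (Function.Embedding.ext fun i => rfl)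
      right_inv := fun Efam => funext fun v => Equiv.ext fun x =>
        Subtype.ext (Econg Efam ⟨L x.1, hmem x.1⟩ v ⟨x.1, rfl⟩ x x.2 rfl) }
  rw [Fintype.card_congr E, Fintype.card_pi, ← Finset.prod_coe_sort s.toFinset]
  refine Finset.prod_congr rfl ?_
  intro v hv
  rw [Fintype.card_equiv (Fintype.equivOfCardEq (hAB v.1 (hv0 v.1 v.2))), hcardA]


lemma prof_pos {α : Type*} [Fintype α] (g : α → ℕ) {v : ℕ} (hv : v ∈ prof g) : 0 < v := by
  rw [prof] at hv
  exact Nat.pos_of_ne_zero (Multiset.mem_filter.1 hv).2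

lemma count_prof_zero {α : Type*} [Fintype α] (g : α → ℕ) : (prof g).count 0 = 0 :=
  Multiset.count_filter_of_neg (by simp)

lemma prof_Lp {m : ℕ} (p : Nat.Partition m) : prof (Lp p) = p.parts := by
  rw [prof, multiset_Lp]
  exact Multiset.filter_eq_self.2 (fun v hv => (p.parts_pos hv).ne')

lemma rowS_eq_zero_iff {a b : ℕ} (M : Matrix (Fin a) (Fin b) Bool) (x : Fin a) :
    rowS M x = 0 ↔ ∀ y, M x y = false := by
  simp [rowS, Finset.sum_eq_zero_iff, Finset.filter_eq_empty_iff]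

lemma colS_eq_zero_iff {a b : ℕ} (M : Matrix (Fin a) (Fin b) Bool) (y : Fin b) :
    colS M y = 0 ↔ ∀ x, M x y = false := by
  simp [colS, Finset.sum_eq_zero_iff, Finset.filter_eq_empty_iff]

/-- transfer of profiles along an embedding covering the support -/
lemma prof_comp {α β : Type*} [Fintype α] [Fintype β] [DecidableEq α] [DecidableEq β]
    (u : α → ℕ) (v : β → ℕ) (f : β ↪ α) (h1 : ∀ j, u (f j) = v j)
    (h2 : ∀ x, (∀ j, f j ≠ x) → u x = 0) : prof u = prof v := by
  classical
  ext t
  rcases eq_or_ne t 0 with rfl | ht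
  · rw [count_prof_zero, count_prof_zero]
  rw [count_prof u t ht, count_prof v t ht]
  refine (Finset.card_bij (fun j _ => f j) ?_ ?_ ?_).symm
  · intro j hj
    simp only [Finset.mem_filter, Finset.mem_univ, true_and] at hj ⊢
    rw [h1]; exact hj
  · intro j _ j' _ h
    exact f.injective h
  · intro x hx
    simp only [Finset.mem_filter, Finset.mem_univ, true_and] at hx
    by_contra hc
    push_neg at hc
    have : ∀ j, f j ≠ x := fun j h => hc j
      (by simp only [Finset.mem_filter, Finset.mem_univ, true_and]
          rw [← h1 j, h]; exact hx) h
    rw [h2 x this] at hx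
    exact ht hx.symm

open Classical in
noncomputable def emb2 {r c a b : ℕ} (f : Fin r ↪ Fin a) (g : Fin c ↪ Fin b)
    (M₀ : Matrix (Fin r) (Fin c) Bool) : Matrix (Fin a) (Fin b) Bool :=
  fun x y => decide (∃ i j, f i = x ∧ g j = y ∧ M₀ i j = true)

lemma emb2_apply {r c a b : ℕ} (f : Fin r ↪ Fin a) (g : Fin c ↪ Fin b)
    (M₀ : Matrix (Fin r) (Fin c) Bool) (i : Fin r) (j : Fin c) :
    emb2 f g M₀ (f i) (g j) = M₀ i j := by
  cases hM : M₀ i j with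
  | false =>
    simp only [emb2, decide_eq_false_iff_not]
    rintro ⟨i', j', hf, hg, hM'⟩
    cases f.injective hf
    cases g.injective hg
    rw [hM] at hM'
    exact Bool.false_ne_true hM'
  | true =>
    simp only [emb2, decide_eq_true_eq]
    exact ⟨i, j, rfl, rfl, hM⟩

lemma emb2_false_left {r c a b : ℕ} (f : Fin r ↪ Fin a) (g : Fin c ↪ Fin b)
    (M₀ : Matrix (Fin r) (Fin c) Bool) (x : Fin a) (y : Fin b) (h : ∀ i, f i ≠ x) :
    emb2 f g M₀ x y = false := by
  simp only [emb2, decide_eq_false_iff_not]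
  rintro ⟨i, j, hf, -, -⟩
  exact h i hf

lemma emb2_false_right {r c a b : ℕ} (f : Fin r ↪ Fin a) (g : Fin c ↪ Fin b)
    (M₀ : Matrix (Fin r) (Fin c) Bool) (x : Fin a) (y : Fin b) (h : ∀ j, g j ≠ y) :
    emb2 f g M₀ x y = false := by
  simp only [emb2, decide_eq_false_iff_not]
  rintro ⟨i, j, -, hg, -⟩
  exact h j hg

/-- a row sum equals the partial sum over any finset containing the support of the row -/
lemma rowS_eq_sum {a b c : ℕ} (M : Matrix (Fin a) (Fin b) Bool) (x : Fin a)
    (g : Fin c ↪ Fin b) (h : ∀ y, (∀ j, g j ≠ y) → M x y = false) :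
    rowS M x = ∑ j, if M x (g j) then 1 else 0 := by
  rw [rowS]
  rw [show (∑ y, if M x y then 1 else 0)
      = ∑ y ∈ Finset.univ.image g, if M x y then 1 else 0 from
    (Finset.sum_subset (Finset.subset_univ _) (fun y _ hy => by
      rw [h y (fun j hj => hy (Finset.mem_image.2 ⟨j, Finset.mem_univ _, hj⟩))]; rfl)).symm]
  rw [Finset.sum_image (fun j _ j' _ hjj => g.injective hjj)]

lemma colS_eq_sum {a b r : ℕ} (M : Matrix (Fin a) (Fin b) Bool) (y : Fin b)
    (f : Fin r ↪ Fin a) (h : ∀ x, (∀ i, f i ≠ x) → M x y = false) :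
    colS M y = ∑ i, if M (f i) y then 1 else 0 := by
  rw [colS]
  rw [show (∑ x, if M x y then 1 else 0)
      = ∑ x ∈ Finset.univ.image f, if M x y then 1 else 0 from
    (Finset.sum_subset (Finset.subset_univ _) (fun x _ hx => by
      rw [h x (fun i hi => hx (Finset.mem_image.2 ⟨i, Finset.mem_univ _, hi⟩))]; rfl)).symm]
  rw [Finset.sum_image (fun i _ i' _ hii => f.injective hii)]

lemma rowS_emb2 {r c a b : ℕ} (f : Fin r ↪ Fin a) (g : Fin c ↪ Fin b)
    (M₀ : Matrix (Fin r) (Fin c) Bool) (i : Fin r) :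
    rowS (emb2 f g M₀) (f i) = rowS M₀ i := by
  rw [rowS_eq_sum (emb2 f g M₀) (f i) g (fun y hy => emb2_false_right f g M₀ _ _ hy), rowS]
  exact Finset.sum_congr rfl fun j _ => by rw [emb2_apply]

lemma colS_emb2 {r c a b : ℕ} (f : Fin r ↪ Fin a) (g : Fin c ↪ Fin b)
    (M₀ : Matrix (Fin r) (Fin c) Bool) (j : Fin c) :
    colS (emb2 f g M₀) (g j) = colS M₀ j := by
  rw [colS_eq_sum (emb2 f g M₀) (g j) f (fun x hx => emb2_false_left f g M₀ _ _ hx), colS]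
  exact Finset.sum_congr rfl fun i _ => by rw [emb2_apply]


lemma cover {α : Type*} [Fintype α] [DecidableEq α] {n : ℕ} (u : α → ℕ) (L : Fin n → ℕ)
    (f : Fin n ↪ α) (hf : ∀ i, u (f i) = L i) (hL0 : ∀ i, L i ≠ 0)
    (hcard : (Finset.univ.filter fun x => u x ≠ 0).card = n) :
    ∀ x, (∀ i, f i ≠ x) → u x = 0 := by
  intro x hx
  by_contra h
  have himg : Finset.univ.image f ⊆ Finset.univ.filter (fun x => u x ≠ 0) := by
    intro z hz
    obtain ⟨i, -, rfl⟩ := Finset.mem_image.1 hz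
    simp only [Finset.mem_filter, Finset.mem_univ, true_and, hf i]
    exact hL0 i
  have hcard2 : (Finset.univ.image f).card = n := by
    rw [Finset.card_image_of_injective _ f.injective, Finset.card_univ, Fintype.card_fin]
  have heq : Finset.univ.image f = Finset.univ.filter (fun x => u x ≠ 0) :=
    Finset.eq_of_subset_of_card_le himg (by rw [hcard2, hcard])
  have hxmem : x ∈ Finset.univ.filter (fun x => u x ≠ 0) := by
    simp only [Finset.mem_filter, Finset.mem_univ, true_and]
    exact h
  rw [← heq] at hxmem
  obtain ⟨i, -, hi⟩ := Finset.mem_image.1 hxmem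
  exact hx i hi

/-- key counting step -/
lemma key {m : ℕ} (a b : ℕ) (p q : Nat.Partition m) :
    Fintype.card {M : Matrix (Fin a) (Fin b) Bool //
        prof (rowS M) = p.parts ∧ prof (colS M) = q.parts}
      * (multFact p * multFact q)
    = Nmat p q * (a.descFactorial (Multiset.card p.parts)
        * b.descFactorial (Multiset.card q.parts)) := by
  classical
  have hNmat : Nmat p q = Fintype.card
      {M₀ : Matrix (Fin (Multiset.card p.parts)) (Fin (Multiset.card q.parts)) Bool //
        (∀ i, rowS M₀ i = Lp p i) ∧ (∀ j, colS M₀ j = Lp q j)} := by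
    rw [show Nmat p q = Nat.card
      {M₀ : Matrix (Fin (Multiset.card p.parts)) (Fin (Multiset.card q.parts)) Bool //
        (∀ i, rowS M₀ i = Lp p i) ∧ (∀ j, colS M₀ j = Lp q j)} from rfl,
      Nat.card_eq_fintype_card]
  set NT := {M₀ : Matrix (Fin (Multiset.card p.parts)) (Fin (Multiset.card q.parts)) Bool //
      (∀ i, rowS M₀ i = Lp p i) ∧ (∀ j, colS M₀ j = Lp q j)} with hNT
  set Tar := {M : Matrix (Fin a) (Fin b) Bool //
      prof (rowS M) = p.parts ∧ prof (colS M) = q.parts} with hTar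
  let T := NT × (Fin (Multiset.card p.parts) ↪ Fin a) × (Fin (Multiset.card q.parts) ↪ Fin b)
  let Φ : T → Tar := fun t =>
    ⟨emb2 t.2.1 t.2.2 t.1.1, by
      rw [prof_comp (rowS (emb2 t.2.1 t.2.2 t.1.1)) (Lp p) t.2.1
          (fun i => by rw [rowS_emb2]; exact t.1.2.1 i)
          (fun x hx => (rowS_eq_zero_iff _ _).2 fun y => emb2_false_left _ _ _ _ _ hx),
        prof_Lp], by
      rw [prof_comp (colS (emb2 t.2.1 t.2.2 t.1.1)) (Lp q) t.2.2
          (fun j => by rw [colS_emb2]; exact t.1.2.2 j)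
          (fun y hy => (colS_eq_zero_iff _ _).2 fun x => emb2_false_right _ _ _ _ _ hy),
        prof_Lp]⟩
  have hfiber : ∀ M : Tar, Fintype.card {t : T // Φ t = M} = multFact p * multFact q := by
    intro M
    have hrowcov : ∀ (f : Fin (Multiset.card p.parts) ↪ Fin a),
        (∀ i, rowS M.1 (f i) = Lp p i) → ∀ x, (∀ i, f i ≠ x) → rowS M.1 x = 0 := by
      intro f hf
      refine cover (rowS M.1) (Lp p) f hf (fun i => (Lp_pos p i).ne') ?_
      rw [← card_prof, M.2.1]
    have hcolcov : ∀ (g : Fin (Multiset.card q.parts) ↪ Fin b),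
        (∀ j, colS M.1 (g j) = Lp q j) → ∀ y, (∀ j, g j ≠ y) → colS M.1 y = 0 := by
      intro g hg
      refine cover (colS M.1) (Lp q) g hg (fun j => (Lp_pos q j).ne') ?_
      rw [← card_prof, M.2.2]
    let EQ : {t : T // Φ t = M} ≃
        ({f : Fin (Multiset.card p.parts) ↪ Fin a // ∀ i, rowS M.1 (f i) = Lp p i} ×
         {g : Fin (Multiset.card q.parts) ↪ Fin b // ∀ j, colS M.1 (g j) = Lp q j}) :=
      { toFun := fun t =>
          (⟨t.1.2.1, fun i => by
              rw [show M.1 = emb2 t.1.2.1 t.1.2.2 t.1.1.1 from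
                  (congrArg Subtype.val t.2).symm, rowS_emb2]
              exact t.1.1.2.1 i⟩,
           ⟨t.1.2.2, fun j => by
              rw [show M.1 = emb2 t.1.2.1 t.1.2.2 t.1.1.1 from
                  (congrArg Subtype.val t.2).symm, colS_emb2]
              exact t.1.1.2.2 j⟩)
        invFun := fun fg =>
          ⟨⟨⟨fun i j => M.1 (fg.1.1 i) (fg.2.1 j),
            ⟨fun i => by
              show (∑ j, if M.1 (fg.1.1 i) (fg.2.1 j) then 1 else 0) = Lp p i
              rw [← rowS_eq_sum M.1 (fg.1.1 i) fg.2.1 (fun y hy =>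
                (colS_eq_zero_iff _ _).1 (hcolcov fg.2.1 fg.2.2 y hy) _)]
              exact fg.1.2 i,
            fun j => by
              show (∑ i, if M.1 (fg.1.1 i) (fg.2.1 j) then 1 else 0) = Lp q j
              rw [← colS_eq_sum M.1 (fg.2.1 j) fg.1.1 (fun x hx =>
                (rowS_eq_zero_iff _ _).1 (hrowcov fg.1.1 fg.1.2 x hx) _)]
              exact fg.2.2 j⟩⟩, fg.1.1, fg.2.1⟩, by
            apply Subtype.ext
            funext x y
            show emb2 fg.1.1 fg.2.1 (fun i j => M.1 (fg.1.1 i) (fg.2.1 j)) x y = M.1 x y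
            by_cases hx : ∃ i, fg.1.1 i = x
            · obtain ⟨i, rfl⟩ := hx
              by_cases hy : ∃ j, fg.2.1 j = y
              · obtain ⟨j, rfl⟩ := hy
                exact emb2_apply _ _ _ i j
              · push_neg at hy
                exact (emb2_false_right _ _ _ _ _ hy).trans
                  ((colS_eq_zero_iff _ _).1 (hcolcov fg.2.1 fg.2.2 y hy) _).symm
            · push_neg at hx
              exact (emb2_false_left _ _ _ _ _ hx).trans
                ((rowS_eq_zero_iff _ _).1 (hrowcov fg.1.1 fg.1.2 x hx) _).symm⟩
        left_inv := fun t => by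
          apply Subtype.ext
          obtain ⟨⟨⟨M₀, hM₀⟩, f, g⟩, ht⟩ := t
          have hval : emb2 f g M₀ = M.1 := congrArg Subtype.val ht
          refine Prod.ext (Subtype.ext ?_) rfl
          funext i j
          show M.1 (f i) (g j) = M₀ i j
          rw [← hval, emb2_apply]
        right_inv := fun fg => rfl }
    rw [Fintype.card_congr EQ, Fintype.card_prod,
      countOrd (rowS M.1) (Lp p) p.parts (fun i => (Lp_pos p i).ne') (multiset_Lp p) M.2.1,
      countOrd (colS M.1) (Lp q) q.parts (fun j => (Lp_pos q j).ne') (multiset_Lp q) M.2.2]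
    rfl
  have hTcard1 : Fintype.card T = Fintype.card Tar * (multFact p * multFact q) := by
    rw [Fintype.card_congr (Equiv.sigmaFiberEquiv Φ).symm, Fintype.card_sigma,
      Finset.sum_congr rfl (fun M _ => hfiber M), Finset.sum_const, Finset.card_univ,
      smul_eq_mul]
  have hTcard2 : Fintype.card T
      = Fintype.card NT * (a.descFactorial (Multiset.card p.parts)
          * b.descFactorial (Multiset.card q.parts)) := by
    rw [show Fintype.card T = Fintype.card NT
          * (Fintype.card (Fin (Multiset.card p.parts) ↪ Fin a)
            * Fintype.card (Fin (Multiset.card q.parts) ↪ Fin b)) from by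
        rw [Fintype.card_prod, Fintype.card_prod],
      Fintype.card_embedding_eq, Fintype.card_embedding_eq, Fintype.card_fin,
      Fintype.card_fin, Fintype.card_fin, Fintype.card_fin]
  rw [hNmat]
  have hfin : Fintype.card Tar * (multFact p * multFact q)
      = Fintype.card NT * (a.descFactorial (Multiset.card p.parts)
        * b.descFactorial (Multiset.card q.parts)) := by
    rw [← hTcard1]; exact hTcard2
  exact hfin


lemma decomp {m : ℕ} (a b : ℕ) :
    ((a * b).choose m)
      = ∑ p : Nat.Partition m, ∑ q : Nat.Partition m,
          Fintype.card {M : Matrix (Fin a) (Fin b) Bool //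
            prof (rowS M) = p.parts ∧ prof (colS M) = q.parts} := by
  classical
  have hsum : ∀ M : Matrix (Fin a) (Fin b) Bool, (∑ x, rowS M x) = ∑ y, colS M y := by
    intro M
    simp only [rowS, colS]
    exact Finset.sum_comm
  have hB : Fintype.card {M : Matrix (Fin a) (Fin b) Bool // (∑ x, rowS M x) = m}
      = (a * b).choose m := by
    have e : {M : Matrix (Fin a) (Fin b) Bool // (∑ x, rowS M x) = m}
        ≃ {s : Finset (Fin a × Fin b) // s.card = m} :=
      { toFun := fun M => ⟨Finset.univ.filter (fun z => M.1 z.1 z.2), by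
          rw [Finset.card_filter, Fintype.sum_prod_type]
          exact M.2⟩
        invFun := fun s => ⟨fun x y => decide ((x, y) ∈ s.1), by
          show (∑ x, ∑ y, if (decide ((x, y) ∈ s.1)) = true then 1 else 0) = m
          simp only [decide_eq_true_eq]
          rw [← Fintype.sum_prod_type (f := fun z : Fin a × Fin b =>
            if z ∈ s.1 then 1 else 0)]
          rw [Finset.sum_ite_mem, Finset.univ_inter, ← Finset.card_eq_sum_ones]
          exact s.2⟩
        left_inv := fun M => Subtype.ext (by
          funext x y
          simp)
        right_inv := fun s => Subtype.ext (by
          ext z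
          simp) }
    rw [Fintype.card_congr e, Fintype.card_finset_len, Fintype.card_prod,
      Fintype.card_fin, Fintype.card_fin]
  have hA : Fintype.card {M : Matrix (Fin a) (Fin b) Bool // (∑ x, rowS M x) = m}
      = ∑ p : Nat.Partition m, ∑ q : Nat.Partition m,
          Fintype.card {M : Matrix (Fin a) (Fin b) Bool //
            prof (rowS M) = p.parts ∧ prof (colS M) = q.parts} := by
    have huniq : ∀ t1 t2 : (Σ p : Nat.Partition m, Σ q : Nat.Partition m,
        {M : Matrix (Fin a) (Fin b) Bool //
          prof (rowS M) = p.parts ∧ prof (colS M) = q.parts}),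
        t1.2.2.1 = t2.2.2.1 → t1 = t2 := by
      rintro ⟨p1, q1, M1, h11, h12⟩ ⟨p2, q2, M2, h21, h22⟩ hM
      dsimp only at hM
      subst hM
      have hp : p1 = p2 := Nat.Partition.ext (h11.symm.trans h21)
      subst hp
      have hq : q1 = q2 := Nat.Partition.ext (h12.symm.trans h22)
      subst hq
      rfl
    have e : {M : Matrix (Fin a) (Fin b) Bool // (∑ x, rowS M x) = m}
        ≃ Σ p : Nat.Partition m, Σ q : Nat.Partition m,
            {M : Matrix (Fin a) (Fin b) Bool //
              prof (rowS M) = p.parts ∧ prof (colS M) = q.parts} :=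
      { toFun := fun M =>
          ⟨⟨prof (rowS M.1), fun hv => prof_pos _ hv,
              by rw [sum_prof]; exact M.2⟩,
           ⟨prof (colS M.1), fun hv => prof_pos _ hv,
              by rw [sum_prof, ← hsum M.1]; exact M.2⟩,
           M.1, rfl, rfl⟩
        invFun := fun t => ⟨t.2.2.1, by
          rw [← sum_prof, t.2.2.2.1, t.1.parts_sum]⟩
        left_inv := fun M => Subtype.ext rfl
        right_inv := fun t => huniq _ _ rfl }
    rw [Fintype.card_congr e, Fintype.card_sigma]
    exact Finset.sum_congr rfl fun p _ => by rw [Fintype.card_sigma]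
  rw [← hB, hA]

lemma fallFac_natCast (a n : ℕ) : fallFac a n = (a.descFactorial n : ℝ) := by
  rcases le_or_gt n a with h | h
  · rw [Nat.descFactorial_eq_prod_range, Nat.cast_prod, fallFac]
    refine Finset.prod_congr rfl fun i hi => ?_
    rw [Finset.mem_range] at hi
    rw [Nat.cast_sub (le_trans (le_of_lt hi) h)]
  · rw [Nat.descFactorial_eq_zero_iff_lt.2 h, fallFac]
    rw [Finset.prod_eq_zero (Finset.mem_range.2 h) (by rw [sub_self])]
    simp

lemma multFact_pos {m : ℕ} (p : Nat.Partition m) : 0 < multFact p :=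
  Finset.prod_pos fun i _ => Nat.factorial_pos _

lemma natReal (m a b : ℕ) :
    ∑ p : Nat.Partition m, ∑ q : Nat.Partition m,
      fallFac a (Multiset.card p.parts) / multFact p *
        (fallFac b (Multiset.card q.parts) / multFact q) * Nmat p q
    = fallFac ((a : ℝ) * b) m / Nat.factorial m := by
  have hsummand : ∀ p q : Nat.Partition m,
      fallFac a (Multiset.card p.parts) / multFact p *
        (fallFac b (Multiset.card q.parts) / multFact q) * Nmat p q
      = (Fintype.card {M : Matrix (Fin a) (Fin b) Bool //
          prof (rowS M) = p.parts ∧ prof (colS M) = q.parts} : ℝ) := by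
    intro p q
    have hkeyR : (Fintype.card {M : Matrix (Fin a) (Fin b) Bool //
          prof (rowS M) = p.parts ∧ prof (colS M) = q.parts} : ℝ)
          * ((multFact p : ℝ) * (multFact q : ℝ))
        = (Nmat p q : ℝ) * ((a.descFactorial (Multiset.card p.parts) : ℝ)
          * (b.descFactorial (Multiset.card q.parts) : ℝ)) := by
      exact_mod_cast congrArg (Nat.cast : ℕ → ℝ) (key a b p q)
    have h1 : (multFact p : ℝ) ≠ 0 := Nat.cast_ne_zero.2 (multFact_pos p).ne'
    have h2 : (multFact q : ℝ) ≠ 0 := Nat.cast_ne_zero.2 (multFact_pos q).ne'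
    rw [fallFac_natCast, fallFac_natCast]
    field_simp
    linarith [hkeyR]
  calc ∑ p : Nat.Partition m, ∑ q : Nat.Partition m,
      fallFac a (Multiset.card p.parts) / multFact p *
        (fallFac b (Multiset.card q.parts) / multFact q) * Nmat p q
      = ∑ p : Nat.Partition m, ∑ q : Nat.Partition m,
        (Fintype.card {M : Matrix (Fin a) (Fin b) Bool //
          prof (rowS M) = p.parts ∧ prof (colS M) = q.parts} : ℝ) :=
        Finset.sum_congr rfl fun p _ => Finset.sum_congr rfl fun q _ => hsummand p q
    _ = (((a * b).choose m : ℕ) : ℝ) := by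
        rw [decomp a b]
        push_cast
        rfl
    _ = fallFac ((a : ℝ) * b) m / Nat.factorial m := by
        rw [show fallFac ((a:ℝ) * b) m = (((a*b).descFactorial m : ℕ) : ℝ) from by
            rw [← Nat.cast_mul, fallFac_natCast],
          Nat.descFactorial_eq_factorial_mul_choose]
        have hm : ((Nat.factorial m : ℕ) : ℝ) ≠ 0 := by
          exact_mod_cast (Nat.factorial_pos m).ne'
        push_cast
        field_simp

lemma polyext (P Q : Polynomial ℝ) (h : ∀ n : ℕ, P.eval (n : ℝ) = Q.eval (n : ℝ)) :
    ∀ x : ℝ, P.eval x = Q.eval x := by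
  intro x
  have hPQ : P - Q = 0 := by
    apply Polynomial.eq_zero_of_infinite_isRoot
    refine Set.Infinite.mono ?_ (Set.infinite_range_of_injective
      (Nat.cast_injective : Function.Injective (Nat.cast : ℕ → ℝ)))
    rintro z ⟨n, rfl⟩
    show Polynomial.IsRoot _ _
    rw [Polynomial.IsRoot, Polynomial.eval_sub, h n, sub_self]
  have : P = Q := by
    have := sub_eq_zero.1 hPQ
    exact this
  rw [this]

end Stmt1Aux

theorem stmt1 (m : ℕ) (x y : ℝ) :
    ∑ p : Nat.Partition m, ∑ q : Nat.Partition m,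
      fallFac x (Multiset.card p.parts) / multFact p *
        (fallFac y (Multiset.card q.parts) / multFact q) * Nmat p q
    = fallFac (x * y) m / Nat.factorial m := by
  classical
  have step1 : ∀ (a : ℕ) (t : ℝ),
      ∑ p : Nat.Partition m, ∑ q : Nat.Partition m,
        fallFac a (Multiset.card p.parts) / multFact p *
          (fallFac t (Multiset.card q.parts) / multFact q) * Nmat p q
      = fallFac ((a : ℝ) * t) m / Nat.factorial m := by
    intro a t
    set P : Polynomial ℝ := ∑ p : Nat.Partition m, ∑ q : Nat.Partition m,
      Polynomial.C (fallFac a (Multiset.card p.parts) / multFact p / multFact q * Nmat p q) *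
        ∏ i ∈ Finset.range (Multiset.card q.parts), (Polynomial.X - Polynomial.C (i : ℝ))
      with hPdef
    set Q : Polynomial ℝ := Polynomial.C ((Nat.factorial m : ℝ))⁻¹ *
      ∏ i ∈ Finset.range m, (Polynomial.C (a : ℝ) * Polynomial.X - Polynomial.C (i : ℝ))
      with hQdef
    have hP : ∀ u : ℝ, P.eval u = ∑ p : Nat.Partition m, ∑ q : Nat.Partition m,
        fallFac a (Multiset.card p.parts) / multFact p *
          (fallFac u (Multiset.card q.parts) / multFact q) * Nmat p q := by
      intro u
      rw [hPdef, Polynomial.eval_finset_sum]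
      refine Finset.sum_congr rfl fun p _ => ?_
      rw [Polynomial.eval_finset_sum]
      refine Finset.sum_congr rfl fun q _ => ?_
      simp only [Polynomial.eval_mul, Polynomial.eval_C, Polynomial.eval_prod,
        Polynomial.eval_sub, Polynomial.eval_X, fallFac]
      ring
    have hQ : ∀ u : ℝ, Q.eval u = fallFac ((a : ℝ) * u) m / Nat.factorial m := by
      intro u
      rw [hQdef]
      simp only [Polynomial.eval_mul, Polynomial.eval_C, Polynomial.eval_prod,
        Polynomial.eval_sub, Polynomial.eval_X, fallFac]
      ring
    have hext := Stmt1Aux.polyext P Q (fun b => by rw [hP, hQ]; exact Stmt1Aux.natReal m a b)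
    rw [← hP t, hext t, hQ t]
  set P : Polynomial ℝ := ∑ p : Nat.Partition m, ∑ q : Nat.Partition m,
    Polynomial.C (fallFac y (Multiset.card q.parts) / multFact q / multFact p * Nmat p q) *
      ∏ i ∈ Finset.range (Multiset.card p.parts), (Polynomial.X - Polynomial.C (i : ℝ))
    with hPdef
  set Q : Polynomial ℝ := Polynomial.C ((Nat.factorial m : ℝ))⁻¹ *
    ∏ i ∈ Finset.range m, (Polynomial.C y * Polynomial.X - Polynomial.C (i : ℝ))
    with hQdef
  have hP : ∀ u : ℝ, P.eval u = ∑ p : Nat.Partition m, ∑ q : Nat.Partition m,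
      fallFac u (Multiset.card p.parts) / multFact p *
        (fallFac y (Multiset.card q.parts) / multFact q) * Nmat p q := by
    intro u
    rw [hPdef, Polynomial.eval_finset_sum]
    refine Finset.sum_congr rfl fun p _ => ?_
    rw [Polynomial.eval_finset_sum]
    refine Finset.sum_congr rfl fun q _ => ?_
    simp only [Polynomial.eval_mul, Polynomial.eval_C, Polynomial.eval_prod,
      Polynomial.eval_sub, Polynomial.eval_X, fallFac]
    ring
  have hQ : ∀ u : ℝ, Q.eval u = fallFac (u * y) m / Nat.factorial m := by
    intro u
    rw [hQdef]
    simp only [Polynomial.eval_mul, Polynomial.eval_C, Polynomial.eval_prod,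
      Polynomial.eval_sub, Polynomial.eval_X, fallFac]
    rw [show (∏ i ∈ Finset.range m, (y * u - (i : ℝ)))
        = ∏ i ∈ Finset.range m, (u * y - (i : ℝ)) from
      Finset.prod_congr rfl fun i _ => by ring]
    ring
  have hext := Stmt1Aux.polyext P Q (fun a => by rw [hP, hQ]; exact step1 a y)
  rw [← hP x, hext x, hQ x]
end

section
/- Let m be a non-negative integer, let q be an integer partition of m with ℓ = |[q]| non-zero parts, and let k be a positive integer. Then the number of k × ℓ matrices with entries in {0,1} whose column sums are q_1, …, q_ℓ equals ∑_{p ⊢ m} (k^{\underline{|[p]|}} / [p]!) · N(p,q), and this number also equals ∏_{i=1}^{ℓ} C(k, q_i), the product of binomial coefficients. -/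
open Finset

namespace Stmt3Aux

/-- Row sums of a boolean matrix. -/
def rsum {k l : ℕ} (M : Matrix (Fin k) (Fin l) Bool) (i : Fin k) : ℕ :=
  ∑ j, if M i j then 1 else 0

/-- Column sums of a boolean matrix. -/
def csum {k l : ℕ} (M : Matrix (Fin k) (Fin l) Bool) (j : Fin l) : ℕ :=
  ∑ i, if M i j then 1 else 0

/-- The parts of a partition as a tuple. -/
def lpf {m : ℕ} (p : Nat.Partition m) : Fin (Multiset.card p.parts) → ℕ :=
  fun i => (partsList p).getD i 0

lemma length_partsList {m : ℕ} (p : Nat.Partition m) :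
    (partsList p).length = Multiset.card p.parts :=
  Multiset.length_sort _

lemma ofFn_lpf {m : ℕ} (p : Nat.Partition m) : List.ofFn (lpf p) = partsList p := by
  apply List.ext_getElem
  · simp [length_partsList]
  · intro i h1 h2
    rw [List.getElem_ofFn]
    exact List.getD_eq_getElem _ _ h2

lemma map_lpf {m : ℕ} (p : Nat.Partition m) :
    Multiset.map (lpf p) Finset.univ.val = p.parts := by
  rw [Fin.univ_val_map, ofFn_lpf]
  exact Multiset.sort_eq _ _

lemma lpf_mem {m : ℕ} (p : Nat.Partition m) (i : Fin (Multiset.card p.parts)) :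
    lpf p i ∈ p.parts := by
  rw [← map_lpf p]
  exact Multiset.mem_map_of_mem _ (Finset.mem_univ i)

lemma lpf_ne_zero {m : ℕ} (p : Nat.Partition m) (i : Fin (Multiset.card p.parts)) :
    lpf p i ≠ 0 :=
  (p.parts_pos (lpf_mem p i)).ne'

lemma sum_lpf {m : ℕ} (p : Nat.Partition m) : ∑ i, lpf p i = m := by
  rw [Finset.sum_eq_multiset_sum, map_lpf]
  exact p.parts_sum

/-- Column-sum condition. -/
def colOK {m : ℕ} (q : Nat.Partition m) {k : ℕ}
    (M : Matrix (Fin k) (Fin (Multiset.card q.parts)) Bool) : Prop :=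
  ∀ j, csum M j = lpf q j

instance {m k : ℕ} (q : Nat.Partition m)
    (M : Matrix (Fin k) (Fin (Multiset.card q.parts)) Bool) : Decidable (colOK q M) := by
  unfold colOK; infer_instance

/-- Multiset of nonzero row sums. -/
def rmul {k l : ℕ} (M : Matrix (Fin k) (Fin l) Bool) : Multiset ℕ :=
  (Finset.univ.val.map (rsum M)).filter (· ≠ 0)

lemma rmul_sum {m k : ℕ} {q : Nat.Partition m}
    {M : Matrix (Fin k) (Fin (Multiset.card q.parts)) Bool} (hM : colOK q M) :
    (rmul M).sum = m := by
  have h1 : (Finset.univ.val.map (rsum M)).sum = m := by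
    rw [← Finset.sum_eq_multiset_sum]
    unfold rsum
    rw [Finset.sum_comm]
    calc ∑ j, ∑ i, (if M i j then 1 else 0) = ∑ j, lpf q j :=
          Finset.sum_congr rfl fun j _ => hM j
      _ = m := sum_lpf q
  have h2 := congrArg Multiset.sum
    (Multiset.filter_add_not (· ≠ 0) (Finset.univ.val.map (rsum M)))
  rw [Multiset.sum_add] at h2
  have h3 : ((Finset.univ.val.map (rsum M)).filter (fun a => ¬ a ≠ 0)).sum = 0 :=
    Multiset.sum_eq_zero (fun x hx => by simpa using Multiset.of_mem_filter hx)
  rw [h3, add_zero] at h2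
  exact h2.trans h1

/-- The partition of `m` given by the nonzero row sums. -/
def phi {m : ℕ} (q : Nat.Partition m) {k : ℕ}
    (M : Matrix (Fin k) (Fin (Multiset.card q.parts)) Bool) (hM : colOK q M) :
    Nat.Partition m :=
  ⟨rmul M, by
    intro i hx
    rw [Stmt3Aux.rmul, Multiset.mem_filter] at hx
    exact Nat.pos_of_ne_zero hx.2, rmul_sum hM⟩


lemma exists_perm_comp {n : ℕ} {f h : Fin n → ℕ}
    (hfh : (List.ofFn f).Perm (List.ofFn h)) : ∃ σ : Equiv.Perm (Fin n), f ∘ σ = h := by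
  have hmono1 : Monotone (f ∘ Tuple.sort f) := Tuple.monotone_sort f
  have hmono2 : Monotone (h ∘ Tuple.sort h) := Tuple.monotone_sort h
  have hperm : (List.ofFn (f ∘ Tuple.sort f)).Perm (List.ofFn (h ∘ Tuple.sort h)) :=
    (((Tuple.sort f).ofFn_comp_perm f).trans hfh).trans
      ((Tuple.sort h).ofFn_comp_perm h).symm
  have heq : f ∘ Tuple.sort f = h ∘ Tuple.sort h :=
    List.ofFn_injective
      (hperm.eq_of_sortedLE hmono1.sortedLE_ofFn hmono2.sortedLE_ofFn)
  refine ⟨(Tuple.sort h).symm.trans (Tuple.sort f), ?_⟩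
  funext x
  have := congrFun heq ((Tuple.sort h).symm x)
  simpa using this

lemma card_fiber {m : ℕ} (p : Nat.Partition m) {k : ℕ} (r : Fin k → ℕ)
    (hr : (Finset.univ.val.map r).filter (· ≠ 0) = p.parts) :
    Nat.card {g : Fin (Multiset.card p.parts) ↪ Fin k // ∀ i, r (g i) = lpf p i}
      = multFact p := by
  classical
  set n := Multiset.card p.parts with hn
  -- the support of r
  have hmap : Multiset.map r (Finset.univ.filter (fun a => r a ≠ 0)).val = p.parts := by
    rw [Finset.filter_val, ← hr, Multiset.filter_map]
    rfl
  have hcard : (Finset.univ.filter (fun a => r a ≠ 0)).card = n := by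
    have := congrArg Multiset.card hmap
    simpa [Finset.card] using this
  have hsupp : Fintype.card {a : Fin k // r a ≠ 0} = n := by
    rw [Fintype.card_subtype]; exact hcard
  set e : {a : Fin k // r a ≠ 0} ≃ Fin n := Fintype.equivFinOfCardEq hsupp with he
  -- values of r enumerated via e.symm
  have hvals : Multiset.map (fun i => r (e.symm i : Fin k)) Finset.univ.val = p.parts := by
    have h1 : Multiset.map e.symm Finset.univ.val
        = (Finset.univ : Finset {a : Fin k // r a ≠ 0}).val := by
      have := Finset.map_univ_equiv e.symm
      calc Multiset.map e.symm Finset.univ.val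
          = (Finset.univ.map e.symm.toEmbedding).val := by rw [Finset.map_val]; rfl
        _ = (Finset.univ : Finset {a : Fin k // r a ≠ 0}).val := by rw [this]
    calc Multiset.map (fun i => r (e.symm i : Fin k)) Finset.univ.val
        = Multiset.map (fun a : {a : Fin k // r a ≠ 0} => r a)
            (Multiset.map e.symm Finset.univ.val) := by
          rw [Multiset.map_map]; rfl
      _ = Multiset.map (fun a : {a : Fin k // r a ≠ 0} => r a)
            (Finset.univ : Finset {a : Fin k // r a ≠ 0}).val := by rw [h1]
      _ = Multiset.map r (Multiset.map Subtype.val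
            (Finset.univ : Finset {a : Fin k // r a ≠ 0}).val) := by
          rw [Multiset.map_map]; rfl
      _ = p.parts := by
          rw [Finset.univ_val_map_subtype_val]; exact hmap
  have hperm : (List.ofFn (fun i => r (e.symm i : Fin k))).Perm (List.ofFn (lpf p)) := by
    rw [← Multiset.coe_eq_coe, ← Fin.univ_val_map, ← Fin.univ_val_map, hvals, map_lpf]
  obtain ⟨σ₀, hσ₀⟩ := exists_perm_comp hperm
  -- the base embedding
  set g₀ : Fin n ↪ Fin k :=
    ⟨fun i => (e.symm (σ₀ i) : Fin k), by
      intro a b hab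
      exact σ₀.injective (e.symm.injective (Subtype.coe_injective hab))⟩ with hg₀def
  have hg₀ : ∀ i, r (g₀ i) = lpf p i := fun i => congrFun hσ₀ i
  -- the bijection with the stabilizer of lpf p
  have hbij : Function.Bijective
      (fun σ : {σ : Equiv.Perm (Fin n) // lpf p ∘ σ = lpf p} =>
        (⟨σ.1.toEmbedding.trans g₀, fun i => by
          show r (g₀ (σ.1 i)) = lpf p i
          rw [hg₀ (σ.1 i)]
          exact congrFun σ.2 i⟩ :
          {g : Fin n ↪ Fin k // ∀ i, r (g i) = lpf p i})) := by
    constructor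
    · rintro ⟨σ, hσ⟩ ⟨σ', hσ'⟩ hss
      have hfun := congrArg (fun x => (x : {g : Fin n ↪ Fin k // ∀ i, r (g i) = lpf p i}).1)
        hss
      apply Subtype.ext
      apply Equiv.ext
      intro i
      exact g₀.injective (DFunLike.congr_fun hfun i)
    · rintro ⟨g, hg⟩
      have hne : ∀ i, r (g i) ≠ 0 := fun i => by rw [hg i]; exact lpf_ne_zero p i
      have hψinj : Function.Injective (fun i => σ₀.symm (e ⟨g i, hne i⟩)) := by
        intro a b hab
        have h1 : (⟨g a, hne a⟩ : {x : Fin k // r x ≠ 0}) = ⟨g b, hne b⟩ :=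
          e.injective (σ₀.symm.injective hab)
        exact g.injective (congrArg Subtype.val h1)
      set τ : Equiv.Perm (Fin n) :=
        Equiv.ofBijective _ (Finite.injective_iff_bijective.mp hψinj) with hτdef
      have hτ : ∀ i, g₀ (τ i) = g i := by
        intro i
        show (e.symm (σ₀ (σ₀.symm (e ⟨g i, hne i⟩))) : Fin k) = g i
        simp
      refine ⟨⟨τ, ?_⟩, ?_⟩
      · funext i
        show lpf p (τ i) = lpf p i
        rw [← hg₀ (τ i), hτ i]
        exact hg i
      · apply Subtype.ext
        apply Function.Embedding.ext
        intro i
        exact hτ i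
  have hcong := Nat.card_congr (Equiv.ofBijective _ hbij)
  rw [← hcong, Nat.card_eq_fintype_card, DomMulAct.stabilizer_card']
  -- identify the product with multFact p
  rw [multFact]
  have himg : Finset.univ.image (lpf p) = p.parts.toFinset := by
    ext v
    simp only [Finset.mem_image, Multiset.mem_toFinset, ← map_lpf p, Multiset.mem_map]
    constructor
    · rintro ⟨i, _, rfl⟩; exact ⟨i, Finset.mem_univ i, rfl⟩
    · rintro ⟨i, _, rfl⟩; exact ⟨i, Finset.mem_univ i, rfl⟩
  rw [himg]
  refine Finset.prod_congr rfl fun v hv => ?_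
  congr 1
  rw [Fintype.card_subtype, ← map_lpf p, Multiset.count_map]
  rw [Multiset.filter_congr (fun (x : Fin (Multiset.card p.parts)) _ => eq_comm)]
  rfl


lemma entry_eq_false {k l : ℕ} {M : Matrix (Fin k) (Fin l) Bool} {a : Fin k}
    (h : rsum M a = 0) (j : Fin l) : M a j = false := by
  have h' : ∑ j, (if M a j then (1:ℕ) else 0) = 0 := h
  have := Finset.sum_eq_zero_iff.mp h' j (Finset.mem_univ j)
  rcases Bool.eq_false_or_eq_true (M a j) with hb | hb
  · rw [hb] at this; simp at this
  · exact hb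

lemma off_range_zero {m : ℕ} (p : Nat.Partition m) {k : ℕ} (r : Fin k → ℕ)
    (hr : (Finset.univ.val.map r).filter (· ≠ 0) = p.parts)
    (g : Fin (Multiset.card p.parts) ↪ Fin k) (hg : ∀ i, r (g i) = lpf p i) :
    ∀ a, (∀ i, g i ≠ a) → r a = 0 := by
  classical
  intro a ha
  by_contra hne
  have hsub : Finset.univ.map g ⊆ Finset.univ.filter (fun x => r x ≠ 0) := by
    intro x hx
    rcases Finset.mem_map.mp hx with ⟨i, _, rfl⟩
    exact Finset.mem_filter.mpr ⟨Finset.mem_univ _, by rw [hg i]; exact lpf_ne_zero p i⟩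
  have hcard : (Finset.univ.filter (fun x => r x ≠ 0)).card = Multiset.card p.parts := by
    have hmap : Multiset.map r (Finset.univ.filter (fun x => r x ≠ 0)).val = p.parts := by
      rw [Finset.filter_val, ← hr, Multiset.filter_map]; rfl
    have := congrArg Multiset.card hmap
    simpa [Finset.card] using this
  have heq : Finset.univ.map g = Finset.univ.filter (fun x => r x ≠ 0) :=
    Finset.eq_of_subset_of_card_le hsub (by simp [hcard])
  have : a ∈ Finset.univ.map g := by
    rw [heq]; exact Finset.mem_filter.mpr ⟨Finset.mem_univ _, hne⟩
  rcases Finset.mem_map.mp this with ⟨i, _, hi⟩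
  exact ha i hi

lemma rmul_eq_parts {m : ℕ} (p : Nat.Partition m) {k l : ℕ}
    (M : Matrix (Fin k) (Fin l) Bool)
    (g : Fin (Multiset.card p.parts) ↪ Fin k)
    (hg : ∀ i, rsum M (g i) = lpf p i)
    (hz : ∀ a, (∀ i, g i ≠ a) → rsum M a = 0) :
    rmul M = p.parts := by
  classical
  have hfe : Finset.univ.filter (fun a => rsum M a ≠ 0) = Finset.univ.map g := by
    ext a
    simp only [Finset.mem_filter, Finset.mem_map, Finset.mem_univ, true_and]
    constructor
    · intro h
      by_contra hc
      push_neg at hc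
      exact h (hz a hc)
    · rintro ⟨i, _, rfl⟩
      rw [hg i]; exact lpf_ne_zero p i
  rw [rmul, Multiset.filter_map]
  calc Multiset.map (rsum M) (Multiset.filter ((· ≠ 0) ∘ rsum M) Finset.univ.val)
      = Multiset.map (rsum M) (Finset.univ.filter (fun a => rsum M a ≠ 0)).val := by
        rw [Finset.filter_val]; rfl
    _ = Multiset.map (rsum M) (Finset.univ.map g).val := by rw [hfe]
    _ = Multiset.map (fun i => rsum M (g i)) Finset.univ.val := by
        rw [Finset.map_val, Multiset.map_map]; rfl
    _ = Multiset.map (lpf p) Finset.univ.val := Multiset.map_congr rfl (fun i _ => hg i)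
    _ = p.parts := map_lpf p

lemma csum_eq_sum_range {k l n : ℕ} (g : Fin n ↪ Fin k) (M : Matrix (Fin k) (Fin l) Bool)
    (hz : ∀ a, (∀ i, g i ≠ a) → rsum M a = 0) (j : Fin l) :
    csum M j = ∑ i, (if M (g i) j then (1:ℕ) else 0) := by
  rw [csum, ← Finset.sum_map Finset.univ g (fun a => if M a j then (1:ℕ) else 0)]
  refine (Finset.sum_subset (Finset.subset_univ _) ?_).symm
  intro a _ ha
  have hz' : rsum M a = 0 := by
    apply hz
    intro i hi
    exact ha (Finset.mem_map.mpr ⟨i, Finset.mem_univ i, hi⟩)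
  rw [entry_eq_false hz' j]
  rfl


lemma card_Sp {m : ℕ} (q p : Nat.Partition m) (k : ℕ) :
    Nat.card {M : Matrix (Fin k) (Fin (Multiset.card q.parts)) Bool //
        colOK q M ∧ rmul M = p.parts} * multFact p
      = k.descFactorial (Multiset.card p.parts) * Nmat p q := by
  classical
  set n := Multiset.card p.parts with hn
  set lq := Multiset.card q.parts with hlq
  let T := {x : (Fin n ↪ Fin k) × Matrix (Fin k) (Fin lq) Bool //
    colOK q x.2 ∧ (∀ i, rsum x.2 (x.1 i) = lpf p i) ∧
      ∀ a, (∀ i, x.1 i ≠ a) → rsum x.2 a = 0}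
  -- Step B : count T as embeddings times Nmat
  have hB : Nat.card T = k.descFactorial n * Nmat p q := by
    have hbij : Function.Bijective (fun x : T =>
        ((x.1.1, ⟨fun i j => x.1.2 (x.1.1 i) j,
          fun i => x.2.2.1 i,
          fun j => (csum_eq_sum_range x.1.1 x.1.2 x.2.2.2 j).symm.trans (x.2.1 j)⟩) :
          (Fin n ↪ Fin k) × {M : Matrix (Fin n) (Fin lq) Bool //
            (∀ i, (∑ j, if M i j then 1 else 0) = (partsList p).getD i 0) ∧
            (∀ j, (∑ i, if M i j then 1 else 0) = (partsList q).getD j 0)})) := by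
      constructor
      · rintro ⟨⟨g, M⟩, hc, hgr, hz⟩ ⟨⟨g', M'⟩, hc', hgr', hz'⟩ hxy
        have h1 : g = g' := congrArg Prod.fst hxy
        subst h1
        have h2 : (fun i j => M (g i) j) = (fun i j => M' (g i) j) :=
          congrArg (fun z => (z.2 : {M : Matrix (Fin n) (Fin lq) Bool //
            (∀ i, (∑ j, if M i j then 1 else 0) = (partsList p).getD i 0) ∧
            (∀ j, (∑ i, if M i j then 1 else 0) = (partsList q).getD j 0)}).1) hxy
        have hM : M = M' := by
          funext a j
          by_cases hrange : ∃ i, g i = a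
          · rcases hrange with ⟨i, rfl⟩
            exact congrFun (congrFun h2 i) j
          · push_neg at hrange
            exact (entry_eq_false (hz a hrange) j).trans
              (entry_eq_false (hz' a hrange) j).symm
        subst hM
        rfl
      · rintro ⟨g, M', hrow, hcol⟩
        set Mfull : Matrix (Fin k) (Fin lq) Bool :=
          fun a j => Function.extend g (fun i => M' i j) (fun _ => false) a with hMfull
        have happ : ∀ i j, Mfull (g i) j = M' i j := fun i j =>
          g.injective.extend_apply _ _ i
        have hoff : ∀ a, (∀ i, g i ≠ a) → ∀ j, Mfull a j = false := fun a ha j =>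
          Function.extend_apply' _ _ _ (fun ⟨i, hi⟩ => ha i hi)
        have hz : ∀ a, (∀ i, g i ≠ a) → rsum Mfull a = 0 := by
          intro a ha
          show ∑ j, (if Mfull a j then (1:ℕ) else 0) = 0
          apply Finset.sum_eq_zero
          intro j _
          rw [hoff a ha j]
          rfl
        have hgr : ∀ i, rsum Mfull (g i) = lpf p i := by
          intro i
          show ∑ j, (if Mfull (g i) j then (1:ℕ) else 0) = lpf p i
          calc ∑ j, (if Mfull (g i) j then (1:ℕ) else 0)
              = ∑ j, (if M' i j then (1:ℕ) else 0) :=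
                Finset.sum_congr rfl fun j _ => by rw [happ i j]
            _ = lpf p i := hrow i
        have hc : colOK q Mfull := by
          intro j
          rw [csum_eq_sum_range g Mfull hz j]
          calc ∑ i, (if Mfull (g i) j then (1:ℕ) else 0)
              = ∑ i, (if M' i j then (1:ℕ) else 0) :=
                Finset.sum_congr rfl fun i _ => by rw [happ i j]
            _ = lpf q j := hcol j
        refine ⟨⟨(g, Mfull), hc, hgr, hz⟩, ?_⟩
        refine Prod.ext rfl ?_
        apply Subtype.ext
        funext i j
        exact happ i j
    rw [Nat.card_congr (Equiv.ofBijective _ hbij), Nat.card_prod]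
    congr 1
    · rw [Nat.card_eq_fintype_card, Fintype.card_embedding_eq, Fintype.card_fin,
        Fintype.card_fin]
  -- Step C : count T fiberwise over matrices
  have hC : Nat.card T = Nat.card {M : Matrix (Fin k) (Fin lq) Bool //
      colOK q M ∧ rmul M = p.parts} * multFact p := by
    let EC : T ≃ Σ M : {M : Matrix (Fin k) (Fin lq) Bool // colOK q M ∧ rmul M = p.parts},
        {g : Fin n ↪ Fin k // ∀ i, rsum M.1 (g i) = lpf p i} :=
    { toFun := fun x =>
        ⟨⟨x.1.2, x.2.1, rmul_eq_parts p x.1.2 x.1.1 x.2.2.1 x.2.2.2⟩, ⟨x.1.1, x.2.2.1⟩⟩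
      invFun := fun y =>
        ⟨(y.2.1, y.1.1), y.1.2.1, y.2.2,
          off_range_zero p (rsum y.1.1) y.1.2.2 y.2.1 y.2.2⟩
      left_inv := fun x => rfl
      right_inv := fun y => rfl }
    rw [Nat.card_congr EC, Nat.card_eq_fintype_card, Fintype.card_sigma]
    have hfib : ∀ M : {M : Matrix (Fin k) (Fin lq) Bool // colOK q M ∧ rmul M = p.parts},
        Fintype.card {g : Fin n ↪ Fin k // ∀ i, rsum M.1 (g i) = lpf p i} = multFact p := by
      intro M
      rw [← Nat.card_eq_fintype_card]
      exact card_fiber p (rsum M.1) M.2.2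
    rw [Finset.sum_congr rfl fun M _ => hfib M, Finset.sum_const, smul_eq_mul,
      Nat.card_eq_fintype_card, Fintype.card]
  rw [← hC, hB]


lemma card_S {m : ℕ} (q : Nat.Partition m) (k : ℕ) :
    Nat.card {M : Matrix (Fin k) (Fin (Multiset.card q.parts)) Bool // colOK q M}
      = ∑ p : Nat.Partition m,
          Nat.card {M : Matrix (Fin k) (Fin (Multiset.card q.parts)) Bool //
            colOK q M ∧ rmul M = p.parts} := by
  classical
  let EA : {M : Matrix (Fin k) (Fin (Multiset.card q.parts)) Bool // colOK q M}
      ≃ Σ p : Nat.Partition m, {M : Matrix (Fin k) (Fin (Multiset.card q.parts)) Bool //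
          colOK q M ∧ rmul M = p.parts} :=
  { toFun := fun M => ⟨phi q M.1 M.2, M.1, M.2, rfl⟩
    invFun := fun x => ⟨x.2.1, x.2.2.1⟩
    left_inv := fun M => rfl
    right_inv := fun x => by
      rcases x with ⟨p, M, hc, hm⟩
      have hp : phi q M hc = p := Nat.Partition.ext hm
      subst hp
      rfl }
  rw [Nat.card_congr EA, Nat.card_eq_fintype_card, Fintype.card_sigma]
  exact Finset.sum_congr rfl fun p _ => by rw [Nat.card_eq_fintype_card]

lemma fallFac_natCast (k n : ℕ) : fallFac (k : ℝ) n = (k.descFactorial n : ℝ) := by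
  by_cases h : n ≤ k
  · rw [fallFac, Nat.descFactorial_eq_prod_range, Nat.cast_prod]
    refine Finset.prod_congr rfl fun i hi => ?_
    rw [Nat.cast_sub (le_trans (le_of_lt (Finset.mem_range.mp hi)) h)]
  · push_neg at h
    rw [Nat.descFactorial_eq_zero_iff_lt.mpr h, Nat.cast_zero, fallFac]
    exact Finset.prod_eq_zero (Finset.mem_range.mpr h) (by simp)

lemma multFact_pos {m : ℕ} (p : Nat.Partition m) : 0 < multFact p :=
  Finset.prod_pos fun i _ => Nat.factorial_pos _

lemma card_col {k : ℕ} (a : ℕ) :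
    Nat.card {v : Fin k → Bool // (∑ i, if v i then (1:ℕ) else 0) = a} = k.choose a := by
  classical
  have hbij : Function.Bijective (fun v : {v : Fin k → Bool //
      (∑ i, if v i then (1:ℕ) else 0) = a} =>
      (⟨Finset.univ.filter (fun i => v.1 i = true), by
        have := v.2
        rwa [Finset.sum_boole, Nat.cast_id] at this⟩ :
        {s : Finset (Fin k) // s.card = a})) := by
    constructor
    · rintro ⟨v, hv⟩ ⟨w, hw⟩ hvw
      have h := congrArg Subtype.val hvw
      apply Subtype.ext
      funext i
      have := Finset.ext_iff.mp h i
      simp only [Finset.mem_filter, Finset.mem_univ, true_and] at this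
      rcases Bool.eq_false_or_eq_true (v i) with hb | hb <;>
        rcases Bool.eq_false_or_eq_true (w i) with hb' | hb' <;>
        simp [hb, hb'] at this ⊢
    · rintro ⟨s, hs⟩
      refine ⟨⟨fun i => decide (i ∈ s), ?_⟩, ?_⟩
      · rw [Finset.sum_boole, Nat.cast_id]
        convert hs using 2
        ext i
        simp
      · apply Subtype.ext
        ext i
        simp
  rw [Nat.card_congr (Equiv.ofBijective _ hbij), Nat.card_eq_fintype_card,
    Fintype.card_finset_len, Fintype.card_fin]

lemma card_S_prod {m : ℕ} (q : Nat.Partition m) (k : ℕ) :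
    Nat.card {M : Matrix (Fin k) (Fin (Multiset.card q.parts)) Bool // colOK q M}
      = (q.parts.map fun a => Nat.choose k a).prod := by
  classical
  let E : {M : Matrix (Fin k) (Fin (Multiset.card q.parts)) Bool // colOK q M}
      ≃ ∀ j : Fin (Multiset.card q.parts),
          {v : Fin k → Bool // (∑ i, if v i then (1:ℕ) else 0) = lpf q j} :=
  { toFun := fun M j => ⟨fun i => M.1 i j, M.2 j⟩
    invFun := fun f => ⟨fun i j => (f j).1 i, fun j => (f j).2⟩
    left_inv := fun M => rfl
    right_inv := fun f => rfl }
  rw [Nat.card_congr E, Nat.card_pi]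
  calc ∏ j, Nat.card {v : Fin k → Bool // (∑ i, if v i then (1:ℕ) else 0) = lpf q j}
      = ∏ j, Nat.choose k (lpf q j) :=
        Finset.prod_congr rfl fun j _ => card_col (lpf q j)
    _ = (Multiset.map (fun j => Nat.choose k (lpf q j)) Finset.univ.val).prod :=
        Finset.prod_eq_multiset_prod _ _
    _ = (Multiset.map (fun a => Nat.choose k a) (Multiset.map (lpf q) Finset.univ.val)).prod := by
        rw [Multiset.map_map]; rfl
    _ = (q.parts.map fun a => Nat.choose k a).prod := by rw [map_lpf]

end Stmt3Aux

theorem stmt3 (m k : ℕ) (hk : 0 < k) (q : Nat.Partition m) :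
    ((Nat.card {M : Matrix (Fin k) (Fin (Multiset.card q.parts)) Bool //
        ∀ j, (∑ i, if M i j then 1 else 0) = (partsList q).getD j 0} : ℝ)
      = ∑ p : Nat.Partition m,
          fallFac k (Multiset.card p.parts) / multFact p * Nmat p q) ∧
    Nat.card {M : Matrix (Fin k) (Fin (Multiset.card q.parts)) Bool //
        ∀ j, (∑ i, if M i j then 1 else 0) = (partsList q).getD j 0}
      = (q.parts.map fun a => Nat.choose k a).prod := by
  classical
  have hcong : Nat.card {M : Matrix (Fin k) (Fin (Multiset.card q.parts)) Bool //
        ∀ j, (∑ i, if M i j then 1 else 0) = (partsList q).getD j 0}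
      = Nat.card {M : Matrix (Fin k) (Fin (Multiset.card q.parts)) Bool //
        Stmt3Aux.colOK q M} := rfl
  constructor
  · rw [hcong, Stmt3Aux.card_S q k, Nat.cast_sum]
    refine Finset.sum_congr rfl fun p _ => ?_
    have h := Stmt3Aux.card_Sp q p k
    have hm : (multFact p : ℝ) ≠ 0 := by
      exact_mod_cast (Stmt3Aux.multFact_pos p).ne'
    rw [Stmt3Aux.fallFac_natCast, div_mul_eq_mul_div, eq_div_iff hm]
    exact_mod_cast h
  · rw [hcong]
    exact Stmt3Aux.card_S_prod q k
end

section
/- Let m be a positive integer. Then ∑_{p,q ⊢ m} (−1)^{|[p]|+|[q]|} · (|[p]| choose [p]) · (|[q]| choose [q]) · N(p,q) = 1^{\underline{m}} / m!; in particular this sum equals 1 if m = 1 and equals 0 if m > 1. Here (|[p]| choose [p]) denotes the multinomial coefficient |[p]|! / [p]! and the sum ranges over all pairs of integer partitions p, q of m. -/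
open Finset

/-- The multinomial coefficient `(|[p]| choose [p]) = |[p]|! / [p]!`. -/
def multinom {m : ℕ} (p : Nat.Partition m) : ℕ :=
  Nat.multinomial p.parts.toFinset (fun i => p.parts.count i)

set_option linter.dupNamespace false

namespace Stmt5Aux


lemma list_sum_eq_sum_range (L : List ℕ) : L.sum = ∑ i ∈ Finset.range L.length, L.getD i 0 := by
  induction L with
  | nil => simp
  | cons a t ih =>
    rw [List.sum_cons, List.length_cons, Finset.sum_range_succ']
    simp only [List.getD_cons_succ, List.getD_cons_zero]
    rw [ih]; ring

lemma fin_sum_getD (L : List ℕ) {k : ℕ} (h : L.length = k) :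
    ∑ i : Fin k, L.getD i 0 = L.sum := by
  subst h
  exact (Fin.sum_univ_eq_sum_range (fun j => L.getD j 0) L.length).trans
    (list_sum_eq_sum_range L).symm

noncomputable def permsFinset (s : Multiset ℕ) : Finset (List ℕ) := s.toList.permutations.toFinset

lemma mem_permsFinset {s : Multiset ℕ} {L : List ℕ} : L ∈ permsFinset s ↔ (L : Multiset ℕ) = s := by
  simp only [permsFinset, List.mem_toFinset, List.mem_permutations]
  constructor
  · intro h
    conv_rhs => rw [← Multiset.coe_toList s]
    exact Multiset.coe_eq_coe.2 h
  · intro h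
    apply Multiset.coe_eq_coe.1
    rw [h, Multiset.coe_toList]

lemma permsFinset_zero : permsFinset 0 = {[]} := by
  ext L; simp [mem_permsFinset]

lemma permsFinset_decomp (s : Multiset ℕ) (hs : s ≠ 0) :
    permsFinset s = s.toFinset.biUnion
      (fun a => (permsFinset (s.erase a)).image (a :: ·)) := by
  ext L
  simp only [mem_permsFinset, Finset.mem_biUnion, Finset.mem_image, Multiset.mem_toFinset]
  constructor
  · intro h
    match L with
    | [] => exact absurd h.symm (by simpa using hs)
    | a :: L' =>
      have ha : a ∈ s := by rw [← h]; simp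
      refine ⟨a, ha, L', ?_, rfl⟩
      rw [← h, ← Multiset.cons_coe, Multiset.erase_cons_head]
  · rintro ⟨a, ha, L', hL', rfl⟩
    rw [← Multiset.cons_coe, hL', Multiset.cons_erase ha]

lemma card_permsFinset_decomp (s : Multiset ℕ) (hs : s ≠ 0) :
    (permsFinset s).card = ∑ a ∈ s.toFinset, (permsFinset (s.erase a)).card := by
  rw [permsFinset_decomp s hs, Finset.card_biUnion]
  · refine Finset.sum_congr rfl (fun a _ => ?_)
    exact Finset.card_image_of_injective _ (fun x y h => by injection h)
  · intro a ha b hb hab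
    simp only [Finset.disjoint_left, Finset.mem_image]
    rintro L ⟨L1, _, rfl⟩ ⟨L2, _, h2⟩
    injection h2 with h3 _
    exact hab h3.symm

lemma prod_count_erase (s : Multiset ℕ) (a : ℕ) (ha : a ∈ s) :
    ∏ b ∈ s.toFinset, (s.count b).factorial
      = s.count a * ∏ b ∈ (s.erase a).toFinset, ((s.erase a).count b).factorial := by
  have hsub : (s.erase a).toFinset ⊆ s.toFinset :=
    Multiset.toFinset_subset.2 (Multiset.erase_subset a s)
  have hext : ∏ b ∈ (s.erase a).toFinset, ((s.erase a).count b).factorial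
      = ∏ b ∈ s.toFinset, ((s.erase a).count b).factorial := by
    apply Finset.prod_subset hsub
    intro b _ hb
    have hz : Multiset.count b (s.erase a) = 0 := by
      by_contra hc
      exact hb (Multiset.mem_toFinset.2 (Multiset.count_pos.1 (Nat.pos_of_ne_zero hc)))
    rw [hz]; rfl
  rw [hext]
  have hma : a ∈ s.toFinset := Multiset.mem_toFinset.2 ha
  rw [← Finset.mul_prod_erase _ (fun b => (s.count b).factorial) hma,
    ← Finset.mul_prod_erase _ (fun b => ((s.erase a).count b).factorial) hma]
  simp only [Multiset.count_erase_self]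
  have h1 : ∀ b ∈ s.toFinset.erase a,
      ((s.erase a).count b).factorial = (s.count b).factorial := by
    intro b hb
    rw [Multiset.count_erase_of_ne (Finset.ne_of_mem_erase hb)]
  rw [Finset.prod_congr rfl h1, ← mul_assoc, Nat.mul_factorial_pred (Multiset.count_pos.2 ha).ne']

lemma card_permsFinset_mul : ∀ (n : ℕ) (s : Multiset ℕ), Multiset.card s = n →
    (permsFinset s).card * ∏ a ∈ s.toFinset, (s.count a).factorial = n.factorial := by
  intro n
  induction n using Nat.strong_induction_on with
  | _ n ih =>
    intro s hs
    rcases n with _ | n'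
    · have : s = 0 := Multiset.card_eq_zero.1 hs
      subst this; simp [permsFinset_zero]
    · have hs0 : s ≠ 0 := by
        intro h; rw [h] at hs; simp at hs
      rw [card_permsFinset_decomp s hs0, Finset.sum_mul]
      have key : ∀ a ∈ s.toFinset,
          (permsFinset (s.erase a)).card * ∏ b ∈ s.toFinset, (s.count b).factorial
            = n'.factorial * s.count a := by
        intro a ha
        have ham : a ∈ s := Multiset.mem_toFinset.1 ha
        rw [prod_count_erase s a ham]
        have hcard : Multiset.card (s.erase a) = n' := by
          rw [Multiset.card_erase_of_mem ham, hs]; rfl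
        have := ih n' (by omega) (s.erase a) hcard
        calc (permsFinset (s.erase a)).card *
              (s.count a * ∏ b ∈ (s.erase a).toFinset, ((s.erase a).count b).factorial)
            = ((permsFinset (s.erase a)).card * ∏ b ∈ (s.erase a).toFinset, ((s.erase a).count b).factorial) * s.count a := by ring
          _ = n'.factorial * s.count a := by rw [this]
      rw [Finset.sum_congr rfl key, ← Finset.mul_sum, Multiset.toFinset_sum_count_eq, hs,
        Nat.factorial_succ, mul_comm]

lemma card_permsFinset (s : Multiset ℕ) :
    (permsFinset s).card = Nat.multinomial s.toFinset s.count := by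
  have h1 := card_permsFinset_mul (Multiset.card s) s rfl
  have h2 := Nat.multinomial_spec s.toFinset s.count
  rw [Multiset.toFinset_sum_count_eq] at h2
  have hpos : 0 < ∏ a ∈ s.toFinset, (s.count a).factorial :=
    Finset.prod_pos (fun a _ => Nat.factorial_pos _)
  apply Nat.eq_of_mul_eq_mul_right hpos
  rw [h1, mul_comm]
  exact h2.symm

def CL : ℕ → ℕ → Finset (List ℕ)
  | m, 0 => if m = 0 then {([] : List ℕ)} else ∅
  | m, (l+1) => (Finset.Icc 1 m).biUnion (fun a => (CL (m-a) l).image (a :: ·))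

lemma mem_CL : ∀ (l m : ℕ) (L : List ℕ),
    L ∈ CL m l ↔ L.length = l ∧ L.sum = m ∧ ∀ a ∈ L, 0 < a := by
  intro l
  induction l with
  | zero =>
    intro m L
    by_cases hm : m = 0
    · subst hm
      constructor
      · intro h
        have : L = [] := by simpa [CL] using h
        subst this; simp
      · rintro ⟨h1, _, _⟩
        have : L = [] := List.length_eq_zero_iff.1 h1
        subst this; simp [CL]
    · constructor
      · intro h; exact absurd h (by simp [CL, hm])
      · rintro ⟨h1, h2, _⟩
        exfalso
        rw [List.length_eq_zero_iff.1 h1] at h2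
        simp at h2; exact hm h2.symm
  | succ l ih =>
    intro m L
    simp only [CL, Finset.mem_biUnion, Finset.mem_image, Finset.mem_Icc]
    constructor
    · rintro ⟨a, ⟨ha1, ha2⟩, L', hL', rfl⟩
      obtain ⟨h1, h2, h3⟩ := (ih _ _).1 hL'
      refine ⟨by simp [h1], by simp [h2]; omega, ?_⟩
      intro b hb
      rcases List.mem_cons.1 hb with rfl | hb
      · exact ha1
      · exact h3 b hb
    · rintro ⟨h1, h2, h3⟩
      match L with
      | [] => simp at h1
      | a :: L' =>
        have ha : 0 < a := h3 a (List.mem_cons_self)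
        have hsum : L'.sum = m - a := by simp at h2; omega
        have ham : a ≤ m := by simp at h2; omega
        refine ⟨a, ⟨ha, ham⟩, L', (ih _ _).2 ⟨by simpa using h1, hsum, fun b hb => h3 b (List.mem_cons_of_mem a hb)⟩, rfl⟩

lemma card_CL_succ (m l : ℕ) :
    (CL m (l+1)).card = ∑ a ∈ Finset.Icc 1 m, (CL (m-a) l).card := by
  show (Finset.biUnion _ _).card = _
  rw [Finset.card_biUnion]
  · exact Finset.sum_congr rfl fun a _ =>
      Finset.card_image_of_injective _ (fun x y h => by injection h)
  · intro a _ b _ hab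
    simp only [Finset.disjoint_left, Finset.mem_image]
    rintro L ⟨L1, _, rfl⟩ ⟨L2, _, h2⟩
    injection h2 with h3 _
    exact hab h3.symm

noncomputable def gg (x : ℕ) : ℝ := if x = 0 then 1 else if x = 1 then -1 else 0

lemma sum_range_gg : ∀ m : ℕ, 1 ≤ m → ∑ j ∈ Finset.range m, gg j = if m = 1 then 1 else 0 := by
  intro m
  induction m with
  | zero => omega
  | succ n ih =>
    intro _
    rcases Nat.eq_zero_or_pos n with rfl | hn
    · simp [gg]
    rw [Finset.sum_range_succ, ih hn]
    rcases Nat.lt_or_ge n 2 with h2 | h2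
    · have : n = 1 := by omega
      subst this; norm_num [gg]
    · have h3 : n ≠ 1 := by omega
      have h4 : n ≠ 0 := by omega
      have h5 : n + 1 ≠ 1 := by omega
      simp [gg, h3, h4, h5]

lemma CLsum : ∀ (m M : ℕ), m ≤ M →
    ∑ l ∈ Finset.range (M+1), (-1:ℝ)^l * (CL m l).card = gg m := by
  intro m
  induction m using Nat.strong_induction_on with
  | _ m ih =>
    intro M hM
    rcases Nat.eq_zero_or_pos m with rfl | hm
    · rw [Finset.sum_eq_single_of_mem 0 (Finset.mem_range.2 (by omega))]
      · simp [CL, gg]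
      · intro l _ hl
        match l, hl with
        | (l'+1), _ =>
          have : CL 0 (l'+1) = ∅ := by
            show Finset.biUnion _ _ = ∅
            simp
          rw [this]; simp
    · obtain ⟨M', rfl⟩ : ∃ M', M = M' + 1 := ⟨M - 1, by omega⟩
      rw [Finset.sum_range_succ']
      have hCL0 : CL m 0 = ∅ := by
        have : m ≠ 0 := by omega
        simp [CL, this]
      rw [hCL0]
      simp only [Finset.card_empty, Nat.cast_zero, mul_zero, add_zero]
      have hmain : ∑ l ∈ Finset.range (M'+1), (-1:ℝ)^(l+1) * ((CL m (l+1)).card : ℝ)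
          = -∑ a ∈ Finset.Icc 1 m, ∑ l ∈ Finset.range (M'+1), (-1:ℝ)^l * ((CL (m-a) l).card : ℝ) := by
        have step1 : ∀ l ∈ Finset.range (M'+1), (-1:ℝ)^(l+1) * ((CL m (l+1)).card : ℝ)
            = ∑ a ∈ Finset.Icc 1 m, -((-1:ℝ)^l * ((CL (m-a) l).card : ℝ)) := by
          intro l _
          rw [card_CL_succ]
          push_cast
          rw [Finset.mul_sum]
          exact Finset.sum_congr rfl fun a _ => by ring
        rw [Finset.sum_congr rfl step1, Finset.sum_comm]
        simp only [Finset.sum_neg_distrib]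
      rw [hmain]
      have hIH : ∀ a ∈ Finset.Icc 1 m,
          ∑ l ∈ Finset.range (M'+1), (-1:ℝ)^l * ((CL (m-a) l).card : ℝ) = gg (m-a) := by
        intro a ha
        rw [Finset.mem_Icc] at ha
        exact ih (m-a) (by omega) M' (by omega)
      rw [Finset.sum_congr rfl hIH]
      have hre : ∑ a ∈ Finset.Icc 1 m, gg (m-a) = ∑ j ∈ Finset.range m, gg j := by
        refine Finset.sum_nbij' (fun a => m - a) (fun j => m - j) ?_ ?_ ?_ ?_ ?_
        · intro a ha; simp only [Finset.mem_Icc] at ha; simp only [Finset.mem_range]; omega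
        · intro a ha; simp only [Finset.mem_range] at ha; simp only [Finset.mem_Icc]; omega
        · intro a ha; simp only [Finset.mem_Icc] at ha; omega
        · intro a ha; simp only [Finset.mem_range] at ha; omega
        · intro a _; rfl
      rw [hre, sum_range_gg m hm]
      rcases Nat.lt_or_ge m 2 with h2 | h2
      · have : m = 1 := by omega
        subst this; norm_num [gg]
      · have h3 : m ≠ 1 := by omega
        have h4 : m ≠ 0 := by omega
        simp [gg, h3, h4]

variable {k : ℕ}

def Wset (r : Fin k → ℕ) (l : ℕ) : Finset (Fin l → Finset (Fin k)) :=
  Finset.univ.filter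
    (fun f => (∀ j, (f j).Nonempty) ∧ ∀ i, (∑ j, if i ∈ f j then 1 else 0) = r i)

lemma mem_Wset {r : Fin k → ℕ} {l : ℕ} {f : Fin l → Finset (Fin k)} :
    f ∈ Wset r l ↔ (∀ j, (f j).Nonempty) ∧ ∀ i, (∑ j, if i ∈ f j then 1 else 0) = r i := by
  simp [Wset]

lemma card_Wset_zero (r : Fin k → ℕ) :
    (Wset r 0).card = if r = 0 then 1 else 0 := by
  by_cases hr : r = 0
  · subst hr
    rw [if_pos rfl]
    have : Wset (0 : Fin k → ℕ) 0 = Finset.univ := by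
      ext f
      simp only [mem_Wset, Finset.mem_univ, iff_true]
      exact ⟨fun j => j.elim0, fun i => by simp⟩
    rw [this, Finset.card_univ]
    exact Fintype.card_unique
  · rw [if_neg hr]
    rw [Finset.card_eq_zero]
    ext f
    simp only [mem_Wset, Finset.notMem_empty, iff_false, not_and]
    intro _
    intro hc
    apply hr
    funext i
    rw [← hc i]
    simp
def cands (r : Fin k → ℕ) : Finset (Finset (Fin k)) :=
  Finset.univ.filter (fun C => C.Nonempty ∧ ∀ i ∈ C, 0 < r i)

def decr (r : Fin k → ℕ) (C : Finset (Fin k)) : Fin k → ℕ :=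
  fun i => r i - if i ∈ C then 1 else 0

lemma fiber_card (r : Fin k → ℕ) (l : ℕ) (C : Finset (Fin k)) (hCne : C.Nonempty)
    (hCr : ∀ i ∈ C, 0 < r i) :
    ((Wset r (l+1)).filter (fun f => f 0 = C)).card = (Wset (decr r C) l).card := by
  apply Finset.card_bij' (fun f (_ : f ∈ (Wset r (l+1)).filter (fun f => f 0 = C)) => Fin.tail f)
    (fun g (_ : g ∈ Wset (decr r C) l) => Fin.cons C g)
  · intro f hf
    obtain ⟨hfW, hf0⟩ := Finset.mem_filter.1 hf
    rw [mem_Wset] at hfW ⊢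
    refine ⟨fun j => hfW.1 j.succ, fun i => ?_⟩
    have h2 := hfW.2 i
    rw [Fin.sum_univ_succ, hf0] at h2
    simp only [Fin.tail, decr]
    by_cases hiC : i ∈ C
    · simp only [if_pos hiC] at h2 ⊢; exact (by omega : ∀ a c : ℕ, 1 + a = c → a = c - 1) _ _ h2
    · simp only [if_neg hiC] at h2 ⊢; exact (by omega : ∀ a c : ℕ, 0 + a = c → a = c - 0) _ _ h2
  · intro g hg
    rw [mem_Wset] at hg
    rw [Finset.mem_filter]
    constructor
    · rw [mem_Wset]
      constructor
      · intro j
        refine Fin.cases ?_ ?_ j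
        · simpa using hCne
        · intro j'; simpa using hg.1 j'
      · intro i
        rw [Fin.sum_univ_succ]
        simp only [Fin.cons_zero, Fin.cons_succ]
        have h2 := hg.2 i
        simp only [decr] at h2
        by_cases hiC : i ∈ C
        · have hri := hCr i hiC
          simp only [if_pos hiC] at h2 ⊢; omega
        · simp only [if_neg hiC] at h2 ⊢; omega
    · simp
  · intro f hf
    rw [← (Finset.mem_filter.1 hf).2]
    exact Fin.cons_self_tail f
  · intro g hg
    simp

lemma fiber_card_zero (r : Fin k → ℕ) (l : ℕ) (C : Finset (Fin k)) (hC : C ∉ cands r) :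
    ((Wset r (l+1)).filter (fun f => f 0 = C)).card = 0 := by
  rw [Finset.card_eq_zero]
  ext f
  simp only [Finset.mem_filter, Finset.notMem_empty, iff_false, not_and]
  intro hf h0
  apply hC
  rw [mem_Wset] at hf
  simp only [cands, Finset.mem_filter, Finset.mem_univ, true_and]
  constructor
  · rw [← h0]; exact hf.1 0
  · intro i hi
    have := hf.2 i
    rw [Fin.sum_univ_succ, h0] at this
    simp only [if_pos hi] at this
    omega

lemma card_Wset_succ (r : Fin k → ℕ) (l : ℕ) :
    (Wset r (l+1)).card = ∑ C ∈ cands r, (Wset (decr r C) l).card := by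
  have h1 : (Wset r (l+1)).card
      = ∑ C ∈ (Finset.univ : Finset (Finset (Fin k))),
          ((Wset r (l+1)).filter (fun f => f 0 = C)).card :=
    Finset.card_eq_sum_card_fiberwise (fun f _ => Finset.mem_univ _)
  rw [h1]
  rw [← Finset.sum_subset (Finset.subset_univ (cands r))
    (fun C _ hC => fiber_card_zero r l C hC)]
  refine Finset.sum_congr rfl fun C hC => ?_
  simp only [cands, Finset.mem_filter, Finset.mem_univ, true_and] at hC
  exact fiber_card r l C hC.1 hC.2

lemma neg_one_pow_sub (n c : ℕ) (h : c ≤ n) : (-1:ℝ)^(n-c) = (-1)^n * (-1)^c := by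
  have h1 : n + c = (n - c) + 2*c := by omega
  have : ((-1:ℝ))^(n+c) = (-1)^(n-c) * ((-1)^2)^c := by
    rw [h1, pow_add, pow_mul]
  rw [← pow_add]
  rw [this]
  norm_num

lemma sum_decr (r : Fin k → ℕ) (C : Finset (Fin k)) (hC : ∀ i ∈ C, 0 < r i) :
    ∑ i, decr r C i = (∑ i, r i) - C.card ∧ C.card ≤ ∑ i, r i := by
  have hite : ∑ i : Fin k, (if i ∈ C then 1 else 0) = C.card := by
    rw [Finset.sum_ite_mem, Finset.univ_inter, Finset.card_eq_sum_ones]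
  have hle : ∀ i : Fin k, (if i ∈ C then 1 else 0) ≤ r i := by
    intro i
    by_cases hiC : i ∈ C
    · rw [if_pos hiC]; exact hC i hiC
    · rw [if_neg hiC]; exact Nat.zero_le _
  have hsum : ∑ i, decr r C i + ∑ i : Fin k, (if i ∈ C then 1 else 0) = ∑ i, r i := by
    rw [← Finset.sum_add_distrib]
    refine Finset.sum_congr rfl fun i _ => ?_
    have := hle i
    simp only [decr]
    omega
  constructor
  · omega
  · omega

lemma cands_eq (r : Fin k → ℕ) :
    cands r = ((Finset.univ.filter (fun i => 0 < r i)).powerset).erase ∅ := by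
  ext C
  simp only [cands, Finset.mem_filter, Finset.mem_univ, true_and, Finset.mem_erase,
    Finset.mem_powerset]
  constructor
  · rintro ⟨h1, h2⟩
    refine ⟨Finset.nonempty_iff_ne_empty.1 h1, fun i hi => ?_⟩
    simp only [Finset.mem_filter, Finset.mem_univ, true_and]
    exact h2 i hi
  · rintro ⟨h1, h2⟩
    refine ⟨Finset.nonempty_iff_ne_empty.2 h1, fun i hi => ?_⟩
    have := h2 hi
    simp only [Finset.mem_filter] at this
    exact this.2

lemma Wsum : ∀ (n : ℕ) (r : Fin k → ℕ), (∑ i, r i) = n → ∀ M, n ≤ M →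
    ∑ l ∈ Finset.range (M+1), (-1:ℝ)^l * ((Wset r l).card : ℝ) = (-1:ℝ)^n := by
  intro n
  induction n using Nat.strong_induction_on with
  | _ n ih =>
    intro r hr M hM
    rcases Nat.eq_zero_or_pos n with rfl | hn
    · have hr0 : r = 0 := by
        funext i
        have := Finset.sum_eq_zero_iff.1 hr i (Finset.mem_univ i)
        exact this
      subst hr0
      rw [Finset.sum_eq_single_of_mem 0 (Finset.mem_range.2 (by omega))]
      · rw [card_Wset_zero]; simp
      · intro l _ hl
        obtain ⟨l', rfl⟩ : ∃ l', l = l' + 1 := ⟨l - 1, by omega⟩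
        have hcz : cands (0 : Fin k → ℕ) = ∅ := by
          ext C
          simp only [cands, Finset.mem_filter, Finset.mem_univ, true_and,
            Finset.notMem_empty, iff_false, not_and]
          rintro ⟨i, hi⟩ h
          exact absurd (h i hi) (by simp)
        rw [card_Wset_succ, hcz]
        simp
    · obtain ⟨M', rfl⟩ : ∃ M', M = M' + 1 := ⟨M - 1, by omega⟩
      rw [Finset.sum_range_succ']
      have h0 : (Wset r 0).card = 0 := by
        rw [card_Wset_zero, if_neg]
        intro hc
        rw [hc] at hr
        simp at hr
        omega
      rw [h0]
      simp only [Nat.cast_zero, mul_zero, add_zero]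
      have hmain : ∑ l ∈ Finset.range (M'+1), (-1:ℝ)^(l+1) * ((Wset r (l+1)).card : ℝ)
          = -∑ C ∈ cands r, ∑ l ∈ Finset.range (M'+1), (-1:ℝ)^l * ((Wset (decr r C) l).card : ℝ) := by
        have step1 : ∀ l ∈ Finset.range (M'+1), (-1:ℝ)^(l+1) * ((Wset r (l+1)).card : ℝ)
            = ∑ C ∈ cands r, -((-1:ℝ)^l * ((Wset (decr r C) l).card : ℝ)) := by
          intro l _
          rw [card_Wset_succ]
          push_cast
          rw [Finset.mul_sum]
          exact Finset.sum_congr rfl fun C _ => by ring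
        rw [Finset.sum_congr rfl step1, Finset.sum_comm]
        simp only [Finset.sum_neg_distrib]
      rw [hmain]
      have hIH : ∀ C ∈ cands r,
          ∑ l ∈ Finset.range (M'+1), (-1:ℝ)^l * ((Wset (decr r C) l).card : ℝ)
            = (-1:ℝ)^(n - C.card) := by
        intro C hC
        simp only [cands, Finset.mem_filter, Finset.mem_univ, true_and] at hC
        obtain ⟨hCne, hCr⟩ := hC
        obtain ⟨hdec, hle⟩ := sum_decr r C hCr
        have hcpos : 0 < C.card := Finset.card_pos.2 hCne
        exact ih (n - C.card) (by omega) _ (by rw [hdec, hr]) M' (by omega)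
      rw [Finset.sum_congr rfl hIH]
      have hsplit : ∀ C ∈ cands r, (-1:ℝ)^(n - C.card) = (-1:ℝ)^n * (-1:ℝ)^C.card := by
        intro C hC
        simp only [cands, Finset.mem_filter, Finset.mem_univ, true_and] at hC
        obtain ⟨hdec, hle⟩ := sum_decr r C hC.2
        rw [hr] at hle
        exact neg_one_pow_sub n C.card hle
      rw [Finset.sum_congr rfl hsplit, ← Finset.mul_sum]
      have hsupp : (Finset.univ.filter (fun i => 0 < r i)) ≠ ∅ := by
        intro hc
        have : ∑ i, r i = 0 := by
          apply Finset.sum_eq_zero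
          intro i _
          by_contra hri
          have : i ∈ Finset.univ.filter (fun i => 0 < r i) := by
            simp only [Finset.mem_filter, Finset.mem_univ, true_and]
            omega
          rw [hc] at this
          exact absurd this (Finset.notMem_empty i)
        omega
      have hps : ∑ C ∈ cands r, (-1:ℝ)^C.card = -1 := by
        rw [cands_eq]
        have hZ : ∑ C ∈ (Finset.univ.filter (fun i => 0 < r i) : Finset (Fin k)).powerset,
            (-1:ℤ)^C.card = 0 := by
          rw [Finset.sum_powerset_neg_one_pow_card, if_neg hsupp]
        have hmem : (∅ : Finset (Fin k)) ∈ (Finset.univ.filter (fun i => 0 < r i) : Finset (Fin k)).powerset := by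
          simp
        have := Finset.sum_erase_add _ (fun C : Finset (Fin k) => (-1:ℤ)^C.card) hmem
        rw [hZ] at this
        have h2 : ∑ C ∈ ((Finset.univ.filter (fun i => 0 < r i) : Finset (Fin k)).powerset).erase ∅,
            (-1:ℤ)^C.card = -1 := by
          simp only [Finset.card_empty, pow_zero] at this
          omega
        calc ∑ C ∈ ((Finset.univ.filter (fun i => 0 < r i) : Finset (Fin k)).powerset).erase ∅,
              (-1:ℝ)^C.card
            = ((∑ C ∈ ((Finset.univ.filter (fun i => 0 < r i) : Finset (Fin k)).powerset).erase ∅,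
              (-1:ℤ)^C.card : ℤ) : ℝ) := by push_cast; rfl
          _ = ((-1 : ℤ) : ℝ) := by rw [h2]
          _ = -1 := by norm_num
      rw [hps]
      ring

lemma ofFn_getD (L : List ℕ) {l : ℕ} (h : L.length = l) :
    List.ofFn (fun j : Fin l => L.getD j 0) = L := by
  subst h
  apply List.ext_getElem (by simp)
  intro n h1 h2
  rw [List.getElem_ofFn]
  show L.getD n 0 = L[n]
  exact List.getD_eq_getElem L 0 h2

noncomputable def permsT (s : Multiset ℕ) (l : ℕ) : Finset (Fin l → ℕ) :=
  (permsFinset s).image (fun L => fun j : Fin l => L.getD j 0)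

lemma mem_permsT {s : Multiset ℕ} {l : ℕ} (hl : Multiset.card s = l) {d : Fin l → ℕ} :
    d ∈ permsT s l ↔ Multiset.map d Finset.univ.val = s := by
  simp only [permsT, Finset.mem_image]
  constructor
  · rintro ⟨L, hL, rfl⟩
    rw [mem_permsFinset] at hL
    have hlen : L.length = l := by rw [← hl, ← hL, Multiset.coe_card]
    rw [Fin.univ_val_map, ofFn_getD L hlen, hL]
  · intro h
    refine ⟨List.ofFn d, ?_, ?_⟩
    · rw [mem_permsFinset, ← h, ← Fin.univ_val_map]
    · funext j
      rw [List.getD_eq_getElem _ _ (by simp), List.getElem_ofFn]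

lemma card_permsT (s : Multiset ℕ) (l : ℕ) (hl : Multiset.card s = l) :
    (permsT s l).card = (permsFinset s).card := by
  apply Finset.card_image_of_injOn
  intro L1 h1 L2 h2 he
  rw [Finset.mem_coe, mem_permsFinset] at h1 h2
  have hl1 : L1.length = l := by rw [← hl, ← h1, Multiset.coe_card]
  have hl2 : L2.length = l := by rw [← hl, ← h2, Multiset.coe_card]
  apply List.ext_getElem (by omega)
  intro n hn1 hn2
  have h : L1.getD n 0 = L2.getD n 0 := congrFun he ⟨n, by omega⟩
  rw [List.getD_eq_getElem _ _ hn1, List.getD_eq_getElem _ _ hn2] at h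
  exact h

lemma exists_perm_tuple {l : ℕ} (d d' : Fin l → ℕ)
    (h : Multiset.map d Finset.univ.val = Multiset.map d' Finset.univ.val) :
    ∃ σ : Equiv.Perm (Fin l), d' = d ∘ σ := by
  have hperm : (List.ofFn d).Perm (List.ofFn d') := by
    rw [Fin.univ_val_map, Fin.univ_val_map] at h
    exact Multiset.coe_eq_coe.1 h
  have h1 : List.ofFn (d ∘ (Tuple.sort d)) = List.ofFn (d' ∘ (Tuple.sort d')) :=
    List.Perm.eq_of_sortedLE
      (Tuple.monotone_sort d).sortedLE_ofFn (Tuple.monotone_sort d').sortedLE_ofFn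
      (((Equiv.Perm.ofFn_comp_perm _ d).trans hperm).trans
        (Equiv.Perm.ofFn_comp_perm _ d').symm)
  have h2 : d ∘ (Tuple.sort d) = d' ∘ (Tuple.sort d') := List.ofFn_injective h1
  refine ⟨(Tuple.sort d) * (Tuple.sort d')⁻¹, ?_⟩
  funext x
  have h3 := congrFun h2 ((Tuple.sort d')⁻¹ x)
  simp only [Function.comp_apply] at h3
  have h4 : (Tuple.sort d') ((Tuple.sort d')⁻¹ x) = x := Equiv.apply_symm_apply _ x
  rw [h4] at h3
  simp only [Function.comp_apply, Equiv.Perm.mul_apply]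
  exact h3.symm

lemma indicator_card {k : ℕ} (A : Finset (Fin k)) :
    (∑ i, if i ∈ A then 1 else 0) = A.card := by
  rw [Finset.sum_ite_mem, Finset.univ_inter]
  exact (Finset.card_eq_sum_ones A).symm

lemma Wfib_card_comp {k : ℕ} (r : Fin k → ℕ) (l : ℕ) (d : Fin l → ℕ) (σ : Equiv.Perm (Fin l)) :
    ((Wset r l).filter (fun f => (fun j => (f j).card) = d)).card
      = ((Wset r l).filter (fun f => (fun j => (f j).card) = d ∘ σ)).card := by
  apply Finset.card_bij'
    (fun f (_ : f ∈ (Wset r l).filter (fun f => (fun j => (f j).card) = d)) => f ∘ σ)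
    (fun g (_ : g ∈ (Wset r l).filter (fun f => (fun j => (f j).card) = d ∘ σ)) => g ∘ σ.symm)
  · intro f hf
    obtain ⟨hfW, hfd⟩ := Finset.mem_filter.1 hf
    rw [mem_Wset] at hfW
    rw [Finset.mem_filter, mem_Wset]
    refine ⟨⟨fun j => hfW.1 (σ j), fun i => ?_⟩, ?_⟩
    · rw [← hfW.2 i]
      exact Equiv.sum_comp σ (fun j => if i ∈ f j then 1 else 0)
    · funext j
      exact congrFun hfd (σ j)
  · intro g hg
    obtain ⟨hgW, hgd⟩ := Finset.mem_filter.1 hg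
    rw [mem_Wset] at hgW
    rw [Finset.mem_filter, mem_Wset]
    refine ⟨⟨fun j => hgW.1 (σ.symm j), fun i => ?_⟩, ?_⟩
    · rw [← hgW.2 i]
      exact Equiv.sum_comp σ.symm (fun j => if i ∈ g j then 1 else 0)
    · funext j
      have := congrFun hgd (σ.symm j)
      simpa using this
  · intro f _
    funext j
    simp
  · intro g _
    funext j
    simp

def rp {m : ℕ} (p : Nat.Partition m) : Fin (Multiset.card p.parts) → ℕ :=
  fun i => (partsList p).getD i 0

lemma partsList_length {m : ℕ} (p : Nat.Partition m) :
    (partsList p).length = Multiset.card p.parts := Multiset.length_sort _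

lemma partsList_coe {m : ℕ} (p : Nat.Partition m) :
    ((partsList p : List ℕ) : Multiset ℕ) = p.parts := Multiset.sort_eq _ _

lemma sum_rp {m : ℕ} (p : Nat.Partition m) : ∑ i, rp p i = m := by
  have h1 : (partsList p).sum = m := by
    have h2 := partsList_coe p
    have h3 := Multiset.sum_coe (partsList p)
    rw [h2] at h3
    rw [← h3]
    exact p.parts_sum
  exact (fin_sum_getD _ (partsList_length p)).trans h1

lemma getD_parts_pos {m : ℕ} (q : Nat.Partition m) (j : Fin (Multiset.card q.parts)) :
    0 < (partsList q).getD j 0 := by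
  have hj : (j : ℕ) < (partsList q).length := by rw [partsList_length]; exact j.isLt
  rw [List.getD_eq_getElem _ _ hj]
  apply q.parts_pos
  have hmem : (partsList q)[(j:ℕ)] ∈ partsList q := List.getElem_mem _
  rwa [← Multiset.mem_coe, partsList_coe] at hmem

lemma Nmat_card {m : ℕ} (p q : Nat.Partition m) :
    ((Wset (rp p) (Multiset.card q.parts)).filter
        (fun f => (fun j => (f j).card) = fun j : Fin (Multiset.card q.parts) =>
          (partsList q).getD j 0)).card = Nmat p q := by
  rw [Nmat, Nat.card_eq_fintype_card, Fintype.card_subtype]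
  apply Finset.card_bij'
    (fun f (_ : f ∈ (Wset (rp p) (Multiset.card q.parts)).filter
        (fun f => (fun j => (f j).card) = fun j : Fin (Multiset.card q.parts) =>
          (partsList q).getD j 0)) => (fun i j => decide (i ∈ f j) :
            Matrix (Fin (Multiset.card p.parts)) (Fin (Multiset.card q.parts)) Bool))
    (fun M _ => fun j => Finset.univ.filter (fun i => M i j = true))
  · intro f hf
    obtain ⟨hfW, hfd⟩ := Finset.mem_filter.1 hf
    rw [mem_Wset] at hfW
    apply Finset.mem_filter.2
    refine ⟨Finset.mem_univ _, fun i => ?_, fun j => ?_⟩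
    · simp only [decide_eq_true_eq]
      exact hfW.2 i
    · simp only [decide_eq_true_eq]
      rw [indicator_card (f j)]
      exact congrFun hfd j
  · intro M hM
    obtain ⟨-, hrow, hcol⟩ := Finset.mem_filter.1 hM
    have hcard : ∀ j, (Finset.univ.filter (fun i => M i j = true)).card
        = (partsList q).getD j 0 := by
      intro j
      rw [← indicator_card]
      simp only [Finset.mem_filter, Finset.mem_univ, true_and]
      exact hcol j
    rw [Finset.mem_filter, mem_Wset]
    refine ⟨⟨fun j => ?_, fun i => ?_⟩, ?_⟩
    · rw [← Finset.card_pos, hcard j]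
      exact getD_parts_pos q j
    · simp only [Finset.mem_filter, Finset.mem_univ, true_and]
      exact hrow i
    · funext j
      exact hcard j
  · intro f _
    funext j
    ext i
    simp
  · intro M _
    funext i j
    simp

lemma W_decomp {m : ℕ} (p : Nat.Partition m) (l : ℕ) :
    (Wset (rp p) l).card
      = ∑ q ∈ Finset.univ.filter (fun q : Nat.Partition m => Multiset.card q.parts = l),
          multinom q * Nmat p q := by
  classical
  set U := Finset.univ.filter (fun q : Nat.Partition m => Multiset.card q.parts = l) with hU
  have hdisj : (↑U : Set (Nat.Partition m)).PairwiseDisjoint (fun q => permsT q.parts l) := by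
    intro q1 h1 q2 h2 hne
    rw [Finset.mem_coe, hU, Finset.mem_filter] at h1 h2
    simp only [Function.onFun]
    rw [Finset.disjoint_left]
    intro d hd1 hd2
    rw [mem_permsT h1.2] at hd1
    rw [mem_permsT h2.2] at hd2
    exact hne (Nat.Partition.ext (hd1.symm.trans hd2))
  have hmaps : ∀ f ∈ Wset (rp p) l,
      (fun j => (f j).card) ∈ U.biUnion (fun q => permsT q.parts l) := by
    intro f hf
    rw [mem_Wset] at hf
    have hsum : ∑ j, (f j).card = m := by
      calc ∑ j, (f j).card = ∑ j, ∑ i, (if i ∈ f j then 1 else 0) :=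
            Finset.sum_congr rfl fun j _ => (indicator_card _).symm
        _ = ∑ i, ∑ j, (if i ∈ f j then 1 else 0) := Finset.sum_comm
        _ = ∑ i, rp p i := Finset.sum_congr rfl fun i _ => hf.2 i
        _ = m := sum_rp p
    have hps : (Multiset.map (fun j => (f j).card) Finset.univ.val).sum = m := by
      have hrfl : (Multiset.map (fun j => (f j).card) Finset.univ.val).sum
          = ∑ j, (f j).card := rfl
      rw [hrfl, hsum]
    have hpos : ∀ {a : ℕ}, a ∈ Multiset.map (fun j => (f j).card) Finset.univ.val → 0 < a := by
      intro a ha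
      rw [Multiset.mem_map] at ha
      obtain ⟨j, _, rfl⟩ := ha
      exact Finset.card_pos.2 (hf.1 j)
    set q : Nat.Partition m := ⟨Multiset.map (fun j => (f j).card) Finset.univ.val, hpos, hps⟩
      with hq
    have hcard : Multiset.card q.parts = l := by
      show Multiset.card (Multiset.map (fun j => (f j).card) Finset.univ.val) = l
      rw [Multiset.card_map]
      exact Finset.card_univ.trans (Fintype.card_fin l)
    refine Finset.mem_biUnion.2 ⟨q, ?_, ?_⟩
    · exact Finset.mem_filter.2 ⟨Finset.mem_univ _, hcard⟩
    · rw [mem_permsT hcard]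
  rw [Finset.card_eq_sum_card_fiberwise hmaps, Finset.sum_biUnion hdisj]
  refine Finset.sum_congr rfl fun q hq => ?_
  rw [hU, Finset.mem_filter] at hq
  obtain ⟨-, hql⟩ := hq
  subst hql
  have hlen : (partsList q).length = Multiset.card q.parts := partsList_length q
  have key : ∀ d ∈ permsT q.parts (Multiset.card q.parts),
      ((Wset (rp p) (Multiset.card q.parts)).filter
        (fun f => (fun j => (f j).card) = d)).card = Nmat p q := by
    intro d hd
    rw [mem_permsT rfl] at hd
    have hd0m : Multiset.map (fun j : Fin (Multiset.card q.parts) => (partsList q).getD j 0)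
        Finset.univ.val = q.parts := by
      rw [Fin.univ_val_map, ofFn_getD _ hlen, partsList_coe]
    obtain ⟨σ, hσ⟩ := exists_perm_tuple _ d (hd0m.trans hd.symm)
    rw [hσ, ← Wfib_card_comp (rp p) _ _ σ]
    exact Nmat_card p q
  rw [Finset.sum_congr rfl key, Finset.sum_const, card_permsT _ _ rfl, card_permsFinset,
    smul_eq_mul]
  rfl

lemma CL_card_eq {m : ℕ} (l : ℕ) :
    (CL m l).card = ∑ p ∈ Finset.univ.filter
      (fun p : Nat.Partition m => Multiset.card p.parts = l), multinom p := by
  have hset : CL m l = (Finset.univ.filter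
      (fun p : Nat.Partition m => Multiset.card p.parts = l)).biUnion
        (fun p => permsFinset p.parts) := by
    ext L
    rw [mem_CL l m L, Finset.mem_biUnion]
    constructor
    · rintro ⟨h1, h2, h3⟩
      have hpos : ∀ {a : ℕ}, a ∈ (↑L : Multiset ℕ) → 0 < a := by
        intro a ha
        exact h3 a (by rwa [Multiset.mem_coe] at ha)
      have hsum : (↑L : Multiset ℕ).sum = m := by rw [Multiset.sum_coe]; exact h2
      refine ⟨⟨↑L, hpos, hsum⟩, ?_, ?_⟩
      · refine Finset.mem_filter.2 ⟨Finset.mem_univ _, ?_⟩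
        show Multiset.card (↑L : Multiset ℕ) = l
        rw [Multiset.coe_card]; exact h1
      · rw [mem_permsFinset]
    · rintro ⟨p, hp, hL⟩
      rw [Finset.mem_filter] at hp
      rw [mem_permsFinset] at hL
      refine ⟨?_, ?_, ?_⟩
      · rw [← Multiset.coe_card, hL]; exact hp.2
      · rw [← Multiset.sum_coe, hL]; exact p.parts_sum
      · intro a ha
        exact p.parts_pos (by rw [← hL]; exact Multiset.mem_coe.2 ha)
  rw [hset, Finset.card_biUnion]
  · exact Finset.sum_congr rfl fun p _ => by rw [card_permsFinset]; rfl
  · intro p1 _ p2 _ hne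
    rw [Function.onFun, Finset.disjoint_left]
    intro L hL1 hL2
    rw [mem_permsFinset] at hL1 hL2
    exact hne (Nat.Partition.ext (hL1.symm.trans hL2))

lemma partition_card_le {m : ℕ} (p : Nat.Partition m) : Multiset.card p.parts ≤ m := by
  have h := Multiset.card_nsmul_le_sum (s := p.parts) (a := 1) (fun x hx => p.parts_pos hx)
  rw [p.parts_sum, smul_eq_mul, mul_one] at h
  exact h

lemma inner_sum {m : ℕ} (hm : 0 < m) (p : Nat.Partition m) :
    ∑ q : Nat.Partition m,
      (-1:ℝ)^(Multiset.card q.parts) * (multinom q : ℝ) * (Nmat p q : ℝ) = (-1:ℝ)^m := by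
  rw [← Finset.sum_fiberwise_of_maps_to (g := fun q : Nat.Partition m => Multiset.card q.parts)
    (t := Finset.range (m+1))
    (fun q _ => Finset.mem_range.2
      (by show Multiset.card q.parts < m + 1; have := partition_card_le q; omega))
    (fun q => (-1:ℝ)^(Multiset.card q.parts) * (multinom q : ℝ) * (Nmat p q : ℝ))]
  have hstep : ∀ l ∈ Finset.range (m+1),
      (∑ q ∈ Finset.univ.filter (fun q : Nat.Partition m => Multiset.card q.parts = l),
        (-1:ℝ)^(Multiset.card q.parts) * (multinom q : ℝ) * (Nmat p q : ℝ))
      = (-1:ℝ)^l * ((Wset (rp p) l).card : ℝ) := by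
    intro l _
    rw [W_decomp p l]
    push_cast
    rw [Finset.mul_sum]
    refine Finset.sum_congr rfl fun q hq => ?_
    rw [(Finset.mem_filter.1 hq).2]
    ring
  rw [Finset.sum_congr rfl hstep]
  exact Wsum m (rp p) (sum_rp p) m le_rfl

lemma outer_sum {m : ℕ} (hm : 0 < m) :
    ∑ p : Nat.Partition m, (-1:ℝ)^(Multiset.card p.parts) * (multinom p : ℝ) = gg m := by
  rw [← Finset.sum_fiberwise_of_maps_to (g := fun p : Nat.Partition m => Multiset.card p.parts)
    (t := Finset.range (m+1))
    (fun p _ => Finset.mem_range.2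
      (by show Multiset.card p.parts < m + 1; have := partition_card_le p; omega))
    (fun p => (-1:ℝ)^(Multiset.card p.parts) * (multinom p : ℝ))]
  have hstep : ∀ l ∈ Finset.range (m+1),
      (∑ p ∈ Finset.univ.filter (fun p : Nat.Partition m => Multiset.card p.parts = l),
        (-1:ℝ)^(Multiset.card p.parts) * (multinom p : ℝ))
      = (-1:ℝ)^l * ((CL m l).card : ℝ) := by
    intro l _
    rw [CL_card_eq l]
    push_cast
    rw [Finset.mul_sum]
    refine Finset.sum_congr rfl fun p hp => ?_
    rw [(Finset.mem_filter.1 hp).2]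
  rw [Finset.sum_congr rfl hstep]
  exact CLsum m m le_rfl

end Stmt5Aux

theorem stmt5 (m : ℕ) (hm : 0 < m) :
    (∑ p : Nat.Partition m, ∑ q : Nat.Partition m,
        (-1 : ℝ) ^ (Multiset.card p.parts + Multiset.card q.parts) *
          multinom p * multinom q * Nmat p q)
      = fallFac 1 m / Nat.factorial m ∧
    (m = 1 →
      (∑ p : Nat.Partition m, ∑ q : Nat.Partition m,
        (-1 : ℝ) ^ (Multiset.card p.parts + Multiset.card q.parts) *
          multinom p * multinom q * Nmat p q) = 1) ∧
    (1 < m →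
      (∑ p : Nat.Partition m, ∑ q : Nat.Partition m,
        (-1 : ℝ) ^ (Multiset.card p.parts + Multiset.card q.parts) *
          multinom p * multinom q * Nmat p q) = 0) := by
  have hS : (∑ p : Nat.Partition m, ∑ q : Nat.Partition m,
      (-1 : ℝ) ^ (Multiset.card p.parts + Multiset.card q.parts) *
        multinom p * multinom q * Nmat p q) = if m = 1 then 1 else 0 := by
    have h1 : ∀ p : Nat.Partition m,
        (∑ q : Nat.Partition m,
          (-1 : ℝ) ^ (Multiset.card p.parts + Multiset.card q.parts) *
            multinom p * multinom q * Nmat p q)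
        = ((-1:ℝ)^(Multiset.card p.parts) * (multinom p : ℝ)) * (-1:ℝ)^m := by
      intro p
      rw [← Stmt5Aux.inner_sum hm p, Finset.mul_sum]
      refine Finset.sum_congr rfl fun q _ => ?_
      rw [pow_add]
      ring
    rw [Finset.sum_congr rfl (fun p _ => h1 p), ← Finset.sum_mul, Stmt5Aux.outer_sum hm]
    by_cases h1m : m = 1
    · subst h1m
      norm_num [Stmt5Aux.gg]
    · have hgg : Stmt5Aux.gg m = 0 := by
        have h0 : m ≠ 0 := by omega
        simp [Stmt5Aux.gg, h1m, h0]
      rw [hgg, if_neg h1m, zero_mul]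
  have hRHS : fallFac 1 m / (Nat.factorial m : ℝ) = if m = 1 then 1 else 0 := by
    by_cases h1m : m = 1
    · subst h1m
      rw [if_pos rfl]
      norm_num [fallFac]
    · have h2 : (1:ℕ) ∈ Finset.range m := Finset.mem_range.2 (by omega)
      have hz : fallFac 1 m = 0 := Finset.prod_eq_zero h2 (by norm_num)
      rw [hz, if_neg h1m, zero_div]
  exact ⟨by rw [hS, hRHS], fun h => by rw [hS, if_pos h],
    fun h => by rw [hS, if_neg (by omega)]⟩
end
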